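/- arXiv:1006.3984 — 6 statements merged into one kernel-verified Lean document; each statement's English description precedes it below -/
import Mathlib

section
/- For every w ∈ Ȟ¹ one has ρ₀(w) = ρ(w). -/
noncomputable section

open Finset

/-- Hoffman's algebra `H = ℚ⟨x,y⟩`, the noncommutative polynomial algebra
over `ℚ` in two indeterminates. -/
abbrev H : Type := FreeAlgebra ℚ (Fin 2)

/-- The indeterminate `x`. -/
def Hx : H := FreeAlgebra.ι ℚ 0

/-- The indeterminate `y`. -/
def Hy : H := FreeAlgebra.ι ℚ 1

/-- `z = x + y`. -/
def Hz : H := Hx + Hy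

/-- `z_k = x^(k-1) y`. -/
def zw (k : ℕ) : H := Hx ^ (k - 1) * Hy

/-- The monomial `z_{k 0} z_{k 1} ⋯ z_{k (l-1)}`. -/
def zwords {l : ℕ} (k : Fin l → ℕ) : H := (List.ofFn fun i => zw (k i)).prod

/-- The monomial `z_{k a} z_{k (a+1)} ⋯ z_{k (a+l-1)}`. -/
def zseq (k : ℕ → ℕ) (a l : ℕ) : H := ((List.range l).map fun t => zw (k (a + t))).prod

/-- `Ȟ¹`: the ℚ-span of the monomials `z_{k₁}⋯z_{k_l}` over tuples of positive
integers not all equal to 1. -/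
def Hcheck : Submodule ℚ H :=
  Submodule.span ℚ
    {w | ∃ (l : ℕ) (k : Fin (l + 1) → ℕ), (∀ i, 1 ≤ k i) ∧ (∃ i, k i ≠ 1) ∧ w = zwords k}

/-- `Ȟ¹_d`: the subspace of `Ȟ¹` spanned by the monomials of total degree `d`. -/
def HcheckDeg (d : ℕ) : Submodule ℚ H :=
  Submodule.span ℚ
    {w | ∃ (l : ℕ) (k : Fin (l + 1) → ℕ),
      (∀ i, 1 ≤ k i) ∧ (∃ i, k i ≠ 1) ∧ (∑ i, k i) = d ∧ w = zwords k}

/-- `H⁰_d`: the span of the monomials `z_{k₁}⋯z_{k_l}` of total degree `d` with `k₁ ≥ 2`. -/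
def H0Deg (d : ℕ) : Submodule ℚ H :=
  Submodule.span ℚ
    {w | ∃ (l : ℕ) (k : Fin (l + 1) → ℕ),
      (∀ i, 1 ≤ k i) ∧ 2 ≤ k 0 ∧ (∑ i, k i) = d ∧ w = zwords k}

/-- The multiplication map `M_n : H^{⊗(n+2)} → H`. -/
def Mn (n : ℕ) : TensorPower ℚ (n + 2) H →ₗ[ℚ] H :=
  PiTensorProduct.lift (MultilinearMap.mkPiAlgebraFin ℚ (n + 2) H)

/-- The `H`-bimodule action `a ◇ t ◇ b` on `H^{⊗(n+2)}`:
`a ◇ (w₁⊗⋯⊗w_{n+2}) ◇ b = w₁b ⊗ w₂ ⊗ ⋯ ⊗ w_{n+1} ⊗ a w_{n+2}`. -/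
def dia (n : ℕ) (a : H) (t : TensorPower ℚ (n + 2) H) (b : H) : TensorPower ℚ (n + 2) H :=
  PiTensorProduct.map
    (fun i => if i = 0 then LinearMap.mulRight ℚ b
      else if i = Fin.last (n + 1) then LinearMap.mulLeft ℚ a
      else LinearMap.id) t

/-- The pure tensor `x ⊗ z^{⊗n} ⊗ y ∈ H^{⊗(n+2)}`. -/
def xzy (n : ℕ) : TensorPower ℚ (n + 2) H :=
  PiTensorProduct.tprod ℚ
    (fun i : Fin (n + 2) => if i = 0 then Hx else if i = Fin.last (n + 1) then Hy else Hz)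

/-- The pure tensor `x ⊗ y^{⊗(n+1)} ∈ H^{⊗(n+2)}`. -/
def xyy (n : ℕ) : TensorPower ℚ (n + 2) H :=
  PiTensorProduct.tprod ℚ (fun i : Fin (n + 2) => if i = 0 then Hx else Hy)

/-- The defining properties of the family of maps `C_n : H → H^{⊗(n+2)}`. -/
def IsC (C : ∀ n : ℕ, H →ₗ[ℚ] TensorPower ℚ (n + 2) H) : Prop :=
  ∀ n, C n 1 = 0 ∧ C n Hx = xzy n ∧ C n Hy = -xzy n ∧
    ∀ w w' : H, C n (w * w') = dia n 1 (C n w) w' + dia n w (C n w') 1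

/-- `γ`: the algebra endomorphism of `H` with `γ(x) = x`, `γ(y) = x + y`
(it is an automorphism). -/
def gam : H →ₐ[ℚ] H := FreeAlgebra.lift ℚ ![Hx, Hz]

/-- `γ⁻¹`: the inverse automorphism of `γ`, having `γ⁻¹(x) = x`, `γ⁻¹(y) = y - x`. -/
def gamInv : H →ₐ[ℚ] H := FreeAlgebra.lift ℚ ![Hx, Hy - Hx]

/-- The defining properties of the family of maps `C̄_n : H → H^{⊗(n+2)}`. -/
def IsCbar (C : ∀ n : ℕ, H →ₗ[ℚ] TensorPower ℚ (n + 2) H) : Prop :=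
  ∀ n, C n 1 = 0 ∧ C n Hx = xyy n ∧ C n Hy = -xyy n ∧
    ∀ w w' : H, C n (w * w') = dia n 1 (C n w) (gamInv w') + dia n (gamInv w) (C n w') 1

/-- The value of `ρ` on the monomial `z_{k 0} ⋯ z_{k (l-1)}` (for `k` periodic of
period `l`):
`∑_{j<l} ∑_{i=1}^{k_j−1} z_{k_j−i+1} z_{k_{j+1}} ⋯ z_{k_{j+l−1}} z_i
  − ∑_{j<l} z_{k_j+1} z_{k_{j+1}} ⋯ z_{k_{j+l−1}}`. -/
def rhoFormula (k : ℕ → ℕ) (l : ℕ) : H :=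
  (∑ j ∈ Finset.range l, ∑ i ∈ Finset.Icc 1 (k j - 1),
      zw (k j - i + 1) * zseq k (j + 1) (l - 1) * zw i) -
    ∑ j ∈ Finset.range l, zw (k j + 1) * zseq k (j + 1) (l - 1)

/-- The defining property of the ℚ-linear map `ρ` on `Ȟ¹`: its values on the
monomials `z_{k₁}⋯z_{k_l}` (positive indices, not all 1). -/
def IsRho (rho : H →ₗ[ℚ] H) : Prop :=
  ∀ (l : ℕ) (k : ℕ → ℕ), 1 ≤ l → (∀ j, k (j + l) = k j) → (∀ j, 1 ≤ k j) →
    (∃ j, k j ≠ 1) → rho (zseq k 0 l) = rhoFormula k l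

/-- The defining property of the map `d` on `ℚ + Hy`: `d(1) = 1`, `d(wy) = γ(w)y`. -/
def IsD (dm : H →ₗ[ℚ] H) : Prop := dm 1 = 1 ∧ ∀ w : H, dm (w * Hy) = gam w * Hy

/-- The `n`-step Lucas numbers `L^n_m`: `L^n_m = 2^m − 1` for `m ≤ n`,
`L^n_m = L^n_{m−1} + ⋯ + L^n_{m−n}` for `m ≥ n+1`, and `L^0_m = 0`. -/
def Lucas (n : ℕ) (m : ℕ) : ℕ :=
  if _hn : n = 0 then 0
  else if _hm : m ≤ n then 2 ^ m - 1
  else ∑ i ∈ (Finset.Icc 1 n).attach, Lucas n (m - i.1)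
termination_by m
decreasing_by
  have h1 := (Finset.mem_Icc.mp i.2).1
  omega

/-- The multiple zeta value `ζ(k₁,…,k_l) = ∑_{n₁ > ⋯ > n_l ≥ 1} 1/(n₁^{k₁}⋯n_l^{k_l})`. -/
def mzeta {l : ℕ} (k : Fin l → ℕ) : ℝ :=
  ∑' n : {n : Fin l → ℕ // StrictAnti n ∧ ∀ i, 0 < n i}, ∏ i, ((n.1 i : ℝ) ^ k i)⁻¹

/-- The multiple zeta-star value
`ζ*(k₁,…,k_l) = ∑_{n₁ ≥ ⋯ ≥ n_l ≥ 1} 1/(n₁^{k₁}⋯n_l^{k_l})`. -/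
def mzetaStar {l : ℕ} (k : Fin l → ℕ) : ℝ :=
  ∑' n : {n : Fin l → ℕ // Antitone n ∧ ∀ i, 0 < n i}, ∏ i, ((n.1 i : ℝ) ^ k i)⁻¹

/-- The defining property of the map `Z : H⁰ → ℝ`. -/
def IsZ (Z : H →ₗ[ℚ] ℝ) : Prop :=
  Z 1 = 1 ∧ ∀ (l : ℕ) (k : Fin (l + 1) → ℕ), (∀ i, 1 ≤ k i) → 2 ≤ k 0 →
    Z (zwords k) = mzeta k

/-- The defining property of the map `Z̄ : H⁰ → ℝ`. -/
def IsZbar (Z : H →ₗ[ℚ] ℝ) : Prop :=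
  Z 1 = 1 ∧ ∀ (l : ℕ) (k : Fin (l + 1) → ℕ), (∀ i, 1 ≤ k i) → 2 ≤ k 0 →
    Z (zwords k) = mzetaStar k

/-- The defining property of the map `α : Hy → Hy`, dividing each monomial by
its depth. -/
def IsAlpha (am : H →ₗ[ℚ] H) : Prop :=
  ∀ (l : ℕ) (k : Fin (l + 1) → ℕ), (∀ i, 1 ≤ k i) →
    am (zwords k) = ((l : ℚ) + 1)⁻¹ • zwords k

/-- Cyclic equivalence on tuples: `v` is a cyclic shift of `u`.  Here `Fin 2`
encodes the two symbols: `0 = y`, `1 = z`. -/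
def cycRel (l : ℕ) (u v : Fin l → Fin 2) : Prop := ∃ j : Fin l, ∀ t, v t = u (t + j)

/-- `X_{l,n}`: tuples in `{y,z}^l` containing at least `n` cyclically consecutive `z`'s
(i.e. some cyclic shift begins with `z^n`).  `0 = y`, `1 = z`. -/
def Xln (l n : ℕ) : Set (Fin l → Fin 2) :=
  {u | ∃ j : Fin l, ∀ t : Fin l, (t : ℕ) < n → u (t + j) = 1}

/-- `Y_{l,n} = X_{l,n}/∼`, the set of cyclic equivalence classes in `X_{l,n}`. -/
def Yln (l n : ℕ) : Type := Quot (fun u v : Xln l n => cycRel l u.1 v.1)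

/-- The letters `y`, `z` of `{y,z}`-tuples, as elements of `H`: `0 ↦ y`, `1 ↦ z`. -/
def yz : Fin 2 → H := ![Hy, Hz]

/-- The product `u₁⋯u_l ∈ H` of a `{y,z}`-tuple. -/
def wprod {l : ℕ} (u : Fin l → Fin 2) : H := (List.ofFn fun t => yz (u t)).prod

def midm (c : H) : TensorPower ℚ 2 H →ₗ[ℚ] H :=
  (Mn 0).comp (PiTensorProduct.map (fun i => if i = 0 then LinearMap.id else LinearMap.mulLeft ℚ c))

lemma Mn_tprod (f : Fin 2 → H) : Mn 0 (PiTensorProduct.tprod ℚ f) = f 0 * f 1 := by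
  simp [Mn, PiTensorProduct.lift.tprod, MultilinearMap.mkPiAlgebraFin_apply, List.ofFn_succ]

lemma midm_tprod (c : H) (f : Fin 2 → H) :
    midm c (PiTensorProduct.tprod ℚ f) = f 0 * (c * f 1) := by
  simp [midm, PiTensorProduct.map_tprod, Mn_tprod]

lemma midm_one : midm 1 = Mn 0 := by
  have : (fun i : Fin 2 => if i = 0 then LinearMap.id else LinearMap.mulLeft ℚ (1:H))
      = fun _ => LinearMap.id := by
    funext i
    split <;> [rfl; exact LinearMap.ext fun z => one_mul z]
  simp [midm, this, PiTensorProduct.map_id]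

lemma midm_dia (c a b : H) (t : TensorPower ℚ 2 H) :
    midm c (dia 0 a t b) = midm (b * (c * a)) t := by
  induction t using PiTensorProduct.induction_on with
  | smul_tprod r f =>
      rw [dia, map_smul, map_smul, map_smul, PiTensorProduct.map_tprod, midm_tprod, midm_tprod]
      have h0 : (Fin.last 1 : Fin 2) = 1 := rfl
      congr 1
      simp [h0, LinearMap.mulRight_apply, LinearMap.mulLeft_apply, mul_assoc]
  | add u v hu hv =>
      rw [dia] at hu hv ⊢
      rw [map_add, map_add, map_add, hu, hv]

section FF
variable (C : ∀ n : ℕ, H →ₗ[ℚ] TensorPower ℚ (n + 2) H)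

def Ff (c w : H) : H := midm c (C 0 w)

variable (hC : IsC C)
include hC

lemma Ff_one (c : H) : Ff C c 1 = 0 := by simp [Ff, (hC 0).1]

lemma Ff_x (c : H) : Ff C c Hx = Hx * (c * Hy) := by
  have h0 : (Fin.last 1 : Fin 2) = 1 := rfl
  rw [Ff, (hC 0).2.1, xzy, midm_tprod]
  norm_num [h0]

lemma Ff_y (c : H) : Ff C c Hy = -(Hx * (c * Hy)) := by
  have h0 : (Fin.last 1 : Fin 2) = 1 := rfl
  rw [Ff, (hC 0).2.2.1, map_neg, xzy, midm_tprod]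
  norm_num [h0]

lemma Ff_mul (c w w' : H) : Ff C c (w * w') = Ff C (w' * c) w + Ff C (c * w) w' := by
  rw [Ff, (hC 0).2.2.2 w w', map_add, midm_dia, midm_dia, Ff, Ff]
  rw [mul_one, one_mul]

lemma Ff_pow (m : ℕ) (c : H) :
    Ff C c (Hx ^ m) = ∑ i ∈ range m, Hx ^ (m - i) * c * (Hx ^ i * Hy) := by
  induction m generalizing c with
  | zero => simpa using Ff_one C hC c
  | succ m ih =>
      rw [pow_succ, Ff_mul C hC, ih, Ff_x C hC, Finset.sum_range_succ]
      congr 1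
      · refine Finset.sum_congr rfl fun i hi => ?_
        have hi' : i < m := Finset.mem_range.mp hi
        have : m + 1 - i = (m - i) + 1 := by omega
        rw [this, pow_succ]
        noncomm_ring
      · have : m + 1 - m = 1 := by omega
        rw [this, pow_one]
        noncomm_ring
end FF

lemma zseq_zero (k : ℕ → ℕ) (a : ℕ) : zseq k a 0 = 1 := by simp [zseq]

lemma zseq_succ_left (k : ℕ → ℕ) (a l : ℕ) :
    zseq k a (l + 1) = zw (k a) * zseq k (a + 1) l := by
  rw [zseq, List.range_succ_eq_map, List.map_cons, List.prod_cons, List.map_map, zseq]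
  simp only [Nat.add_zero]
  congr 1
  refine congrArg List.prod (List.map_congr_left fun t _ => ?_)
  show zw (k (a + (t+1))) = zw (k (a + 1 + t))
  congr 2
  omega

lemma zseq_succ_right (k : ℕ → ℕ) (a l : ℕ) :
    zseq k a (l + 1) = zseq k a l * zw (k (a + l)) := by
  rw [zseq, List.range_succ, List.map_append, List.prod_append, zseq]
  simp

lemma zseq_add (k : ℕ → ℕ) (a m m' : ℕ) :
    zseq k a (m + m') = zseq k a m * zseq k (a + m) m' := by
  rw [zseq, zseq, zseq, List.range_add, List.map_append, List.prod_append, List.map_map]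
  congr 1
  refine congrArg List.prod (List.map_congr_left fun t _ => ?_)
  show zw (k (a + (m + t))) = zw (k (a + m + t))
  congr 2
  omega

lemma zseq_periodic (k : ℕ → ℕ) (l : ℕ) (hk : ∀ j, k (j + l) = k j) (a m : ℕ) :
    zseq k (a + l) m = zseq k a m := by
  rw [zseq, zseq]
  congr 1
  refine List.map_congr_left fun t _ => ?_
  have : a + l + t = (a + t) + l := by omega
  rw [this, hk]

lemma Ff_zw (C : ∀ n : ℕ, H →ₗ[ℚ] TensorPower ℚ (n + 2) H) (hC : IsC C)
    (c : H) (m : ℕ) (hm : 1 ≤ m) :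
    Ff C c (zw m) = (∑ i ∈ Finset.Icc 1 (m - 1), zw (m - i + 1) * c * zw i)
      - Hx * c * zw m := by
  rw [zw, Ff_mul C hC, Ff_pow C hC, Ff_y C hC]
  have hIcc : Finset.Icc 1 (m - 1) = Finset.Ico 1 m := by
    rw [← Finset.Ico_add_one_right_eq_Icc]
    congr 1
    omega
  rw [hIcc, Finset.sum_Ico_eq_sum_range, sub_eq_add_neg]
  congr 1
  · refine Finset.sum_congr rfl fun i hi => ?_
    have hi' : i < m - 1 := Finset.mem_range.mp hi
    have h2 : m - (1 + i) + 1 - 1 = m - 1 - i := by omega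
    have h4 : 1 + i - 1 = i := by omega
    simp only [zw, h2, h4]
    noncomm_ring
  · noncomm_ring

lemma Ff_zseq (C : ∀ n : ℕ, H →ₗ[ℚ] TensorPower ℚ (n + 2) H) (hC : IsC C) (k : ℕ → ℕ) :
    ∀ (l a : ℕ) (c : H), Ff C c (zseq k a l)
      = ∑ j ∈ range l, Ff C (zseq k (a + j + 1) (l - 1 - j) * c * zseq k a j) (zw (k (a + j))) := by
  intro l
  induction l with
  | zero => intro a c; simp [zseq_zero, Ff_one C hC]
  | succ l ih =>
      intro a c
      rw [zseq_succ_left, Ff_mul C hC, ih (a + 1) (c * zw (k a)), Finset.sum_range_succ',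
        add_comm]
      congr 1
      · refine Finset.sum_congr rfl fun j hj => ?_
        have e1 : a + (j + 1) + 1 = a + 1 + j + 1 := by omega
        have e3 : a + (j + 1) = a + 1 + j := by omega
        have e2 : l + 1 - 1 - (j + 1) = l - 1 - j := by omega
        rw [zseq_succ_left k a j, e1, e3, e2]
        congr 1
        noncomm_ring
      · norm_num [zseq_zero]

lemma Hx_mul_zw (m : ℕ) (hm : 1 ≤ m) : Hx * zw m = zw (m + 1) := by
  rw [zw, zw, Nat.add_sub_cancel, ← mul_assoc, ← pow_succ']
  congr 2
  omega

lemma sum_shift (f : ℕ → H) (l : ℕ) (hf : f l = f 0) :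
    ∑ j ∈ range l, f (j + 1) = ∑ j ∈ range l, f j := by
  have h2 := Finset.sum_range_succ' f l
  rw [Finset.sum_range_succ f l, hf] at h2
  exact (add_right_cancel h2).symm

lemma Ff_main (C : ∀ n : ℕ, H →ₗ[ℚ] TensorPower ℚ (n + 2) H) (hC : IsC C) (k : ℕ → ℕ)
    (l : ℕ) (hl : 1 ≤ l) (hper : ∀ j, k (j + l) = k j) (hpos : ∀ j, 1 ≤ k j) :
    Ff C 1 (zseq k 0 l) = rhoFormula k l := by
  obtain ⟨l', rfl⟩ : ∃ l', l = l' + 1 := ⟨l - 1, by omega⟩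
  rw [Ff_zseq C hC]
  have key : ∀ j ∈ range (l' + 1),
      Ff C (zseq k (0 + j + 1) (l' + 1 - 1 - j) * 1 * zseq k 0 j) (zw (k (0 + j)))
        = (∑ i ∈ Finset.Icc 1 (k j - 1), zw (k j - i + 1) * zseq k (j + 1) l' * zw i)
          - Hx * (zseq k (j + 1) l') * zw (k j) := by
    intro j hj
    have hj' : j < l' + 1 := Finset.mem_range.mp hj
    have hc : zseq k (0 + j + 1) (l' + 1 - 1 - j) * 1 * zseq k 0 j = zseq k (j + 1) l' := by
      have e2 : 0 + (l' + 1) = j + 1 + (l' + 1 - 1 - j) := by omega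
      rw [mul_one, zero_add, ← zseq_periodic k (l' + 1) hper 0 j, e2, ← zseq_add]
      congr 1
      omega
    rw [hc, zero_add, Ff_zw C hC _ _ (hpos j)]
  rw [Finset.sum_congr rfl key, Finset.sum_sub_distrib, rhoFormula]
  have hl1 : l' + 1 - 1 = l' := by omega
  rw [hl1]
  congr 1
  have hg : ∀ j, Hx * (zseq k (j + 1) l') * zw (k j)
      = zw (k (j + 1) + 1) * zseq k (j + 1 + 1) l' := by
    intro j
    have h1 : zseq k (j + 1) l' * zw (k j) = zseq k (j + 1) (l' + 1) := by
      rw [zseq_succ_right]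
      congr 2
      have : j + 1 + l' = j + (l' + 1) := by omega
      rw [this, hper]
    rw [mul_assoc, h1, zseq_succ_left, ← mul_assoc, Hx_mul_zw _ (hpos _)]
  have hshift := sum_shift (fun j => zw (k j + 1) * zseq k (j + 1) l') (l' + 1) (by
    show zw (k (l' + 1) + 1) * zseq k (l' + 1 + 1) l' = zw (k 0 + 1) * zseq k (0 + 1) l'
    have e1 : k (l' + 1) = k 0 := by have := hper 0; rwa [Nat.zero_add] at this
    have e2 : l' + 1 + 1 = 1 + (l' + 1) := by omega
    rw [e1, e2, zseq_periodic k (l' + 1) hper])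
  rw [← hshift]
  exact Finset.sum_congr rfl fun j _ => hg j


/-- `ρ₀(w) = ρ(w)` for all `w ∈ Ȟ¹`, where `ρ_n = M_n ∘ C_n`. -/
theorem rho_zero_eq_rho (C : ∀ n : ℕ, H →ₗ[ℚ] TensorPower ℚ (n + 2) H) (hC : IsC C)
    (rho : H →ₗ[ℚ] H) (hrho : IsRho rho) :
    ∀ w ∈ Hcheck, Mn 0 (C 0 w) = rho w := by
  intro w hw
  have hle : Hcheck ≤ LinearMap.ker ((Mn 0).comp (C 0) - rho) := by
    rw [Hcheck, Submodule.span_le]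
    rintro v ⟨l, k, hpos, ⟨i0, hne⟩, rfl⟩
    simp only [SetLike.mem_coe, LinearMap.mem_ker, LinearMap.sub_apply, LinearMap.coe_comp,
      Function.comp_apply, sub_eq_zero]
    set k' : ℕ → ℕ := fun j => k ⟨j % (l + 1), Nat.mod_lt _ (Nat.succ_pos l)⟩ with hk'
    have hper : ∀ j, k' (j + (l + 1)) = k' j := by
      intro j
      simp only [hk']
      congr 1
      exact Fin.ext (by simp [Nat.add_mod_right])
    have hpos' : ∀ j, 1 ≤ k' j := fun j => hpos _
    have hex : ∃ j, k' j ≠ 1 := by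
      refine ⟨i0.1, ?_⟩
      simp only [hk']
      have : (⟨i0.1 % (l + 1), Nat.mod_lt _ (Nat.succ_pos l)⟩ : Fin (l + 1)) = i0 :=
        Fin.ext (by simp [Nat.mod_eq_of_lt i0.isLt])
      rw [this]
      exact hne
    have hzw : zwords k = zseq k' 0 (l + 1) := by
      rw [zwords, zseq, ← (show (List.finRange (l + 1)).map (fun i : Fin (l + 1) => (i : ℕ)) = List.range (l + 1) from
        List.ext_getElem (by simp) (by simp)), List.map_map, List.ofFn_eq_map]
      refine congrArg List.prod (List.map_congr_left fun i _ => ?_)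
      show zw (k i) = zw (k' (0 + i.1))
      congr 1
      simp only [hk', Nat.zero_add]
      congr 1
      exact (Fin.ext (by simp [Nat.mod_eq_of_lt i.isLt])).symm
    rw [hzw, hrho (l + 1) k' (by omega) hper hpos' hex]
    have := Ff_main C hC k' (l + 1) (by omega) hper hpos'
    rw [Ff, midm_one] at this
    exact this
  have := hle hw
  rw [LinearMap.mem_ker, LinearMap.sub_apply, LinearMap.coe_comp, Function.comp_apply,
    sub_eq_zero] at this
  exact this
end
end

section
/- Define sgn(x) = 1, sgn(y) = −1, sgn(z) = 0. If w = u₁⋯u_k with u₁,…,u_k ∈ {x, y, z}, then for every n ≥ 0, ρ_n(w) = ∑_{j=1}^{k} sgn(u_j) · x u_{j+1} ⋯ u_k z^n u₁ ⋯ u_{j−1} y. -/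
noncomputable section

open Finset

lemma dia_dia (n : ℕ) (a a' b b' : H) (t : TensorPower ℚ (n+2) H) :
    dia n a (dia n a' t b') b = dia n (a * a') t (b' * b) := by
  unfold dia
  rw [← LinearMap.comp_apply, ← PiTensorProduct.map_comp]
  have hF : (fun i : Fin (n+2) =>
      (if i = 0 then LinearMap.mulRight ℚ b
        else if i = Fin.last (n + 1) then LinearMap.mulLeft ℚ a else LinearMap.id) ∘ₗ
        if i = 0 then LinearMap.mulRight ℚ b'
        else if i = Fin.last (n + 1) then LinearMap.mulLeft ℚ a' else LinearMap.id)
      = fun i : Fin (n+2) =>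
      if i = 0 then LinearMap.mulRight ℚ (b' * b)
      else if i = Fin.last (n + 1) then LinearMap.mulLeft ℚ (a * a') else LinearMap.id := by
    funext i
    by_cases h0 : i = 0
    · simp [h0, show (0 : Fin (n+2)) ≠ Fin.last (n+1) by simp [Fin.ext_iff],
        LinearMap.mulRight_mul]
    · by_cases hl : i = Fin.last (n+1)
      · simp [h0, hl, LinearMap.mulLeft_mul]
      · simp [h0, hl]
  rw [hF]

lemma dia_smul (n : ℕ) (a b : H) (c : ℚ) (t : TensorPower ℚ (n+2) H) :
    dia n a (c • t) b = c • dia n a t b := map_smul _ _ _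

lemma dia_sum {ι : Type*} (s : Finset ι) (n : ℕ) (a b : H) (t : ι → TensorPower ℚ (n+2) H) :
    dia n a (∑ i ∈ s, t i) b = ∑ i ∈ s, dia n a (t i) b := map_sum _ _ _

lemma prod_aux1 (n : ℕ) (vl : H) :
    (List.ofFn fun i : Fin (n+1) => if i = Fin.last n then vl else Hz).prod = Hz ^ n * vl := by
  induction n with
  | zero => simp
  | succ n ih =>
    rw [List.ofFn_succ]
    simp only [List.prod_cons]
    have h1 : (fun i : Fin (n+1) =>
        if (Fin.succ i) = Fin.last (n+1) then vl else Hz)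
        = fun i : Fin (n+1) => if i = Fin.last n then vl else Hz := by
      funext i
      simp [Fin.succ_eq_last_succ]
    rw [h1, ih, if_neg (by simp [Fin.ext_iff] : ¬(0 : Fin (n+2)) = Fin.last (n+1)),
      pow_succ', mul_assoc]

lemma Mn_dia_xzy (n : ℕ) (a b : H) :
    Mn n (dia n a (xzy n) b) = Hx * b * Hz ^ n * (a * Hy) := by
  unfold Mn dia xzy
  rw [PiTensorProduct.map_tprod, PiTensorProduct.lift.tprod]
  rw [MultilinearMap.mkPiAlgebraFin_apply]
  have h : (fun i : Fin (n+2) => (if i = 0 then LinearMap.mulRight ℚ b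
      else if i = Fin.last (n + 1) then LinearMap.mulLeft ℚ a
      else LinearMap.id : H →ₗ[ℚ] H)
      (if i = 0 then Hx else if i = Fin.last (n + 1) then Hy else Hz))
      = fun i : Fin (n+2) => if i = 0 then Hx * b else if i = Fin.last (n+1) then a * Hy else Hz := by
    funext i
    by_cases h0 : i = 0 <;> by_cases hl : i = Fin.last (n+1) <;> simp [h0, hl]
  rw [h, List.ofFn_succ]
  simp only [List.prod_cons, if_pos rfl]
  have h2 : (fun i : Fin (n+1) =>
      if (Fin.succ i) = 0 then Hx * b else if (Fin.succ i) = Fin.last (n+1) then a * Hy else Hz)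
      = fun i : Fin (n+1) => if i = Fin.last n then a * Hy else Hz := by
    funext i
    simp [Fin.succ_ne_zero, Fin.succ_eq_last_succ]
  rw [h2, prod_aux1, ← mul_assoc]
  simp

lemma C_letter (C : ∀ n : ℕ, H →ₗ[ℚ] TensorPower ℚ (n + 2) H) (hC : IsC C) (n : ℕ)
    (v : Fin 3) : C n ((![Hx, Hy, Hz] : Fin 3 → H) v) = (![(1 : ℚ), -1, 0]) v • xzy n := by
  fin_cases v
  · simp [(hC n).2.1]
  · simp [(hC n).2.2.1]
    exact (neg_one_smul ℚ (xzy n)).symm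
  · simp [Hz, map_add, (hC n).2.1, (hC n).2.2.1]

lemma C_word (C : ∀ n : ℕ, H →ₗ[ℚ] TensorPower ℚ (n + 2) H) (hC : IsC C) (n m : ℕ)
    (u : Fin m → Fin 3) :
    C n (List.ofFn fun j => (![Hx, Hy, Hz] : Fin 3 → H) (u j)).prod =
      ∑ j : Fin m, (![(1 : ℚ), -1, 0]) (u j) •
        dia n ((List.ofFn fun t => (![Hx, Hy, Hz] : Fin 3 → H) (u t)).take (j : ℕ)).prod
          (xzy n)
          (((List.ofFn fun t => (![Hx, Hy, Hz] : Fin 3 → H) (u t)).drop ((j : ℕ) + 1)).prod) := by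
  induction m with
  | zero => simp [(hC n).1]
  | succ m ih =>
    have hfn : (List.ofFn fun j : Fin (m+1) => (![Hx, Hy, Hz] : Fin 3 → H) (u j))
        = (![Hx, Hy, Hz] : Fin 3 → H) (u 0)
          :: List.ofFn (fun j : Fin m => (![Hx, Hy, Hz] : Fin 3 → H) (u j.succ)) :=
      List.ofFn_succ
    rw [hfn, List.prod_cons, (hC n).2.2.2, C_letter C hC n (u 0), dia_smul,
      ih (fun j => u j.succ), dia_sum, Fin.sum_univ_succ]
    simp only [hfn, Fin.val_zero, Fin.val_succ, zero_add, List.take_zero, List.take_succ_cons,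
      List.drop_succ_cons, List.drop_zero, List.prod_cons, List.prod_nil]
    congr 1
    refine Finset.sum_congr rfl fun j _ => ?_
    rw [dia_smul, dia_dia, mul_one]

/-- If `w = u₁⋯u_m` with each `u_j ∈ {x, y, z}` (encoded by `Fin 3`, `0 ↦ x`,
`1 ↦ y`, `2 ↦ z`, with `sgn(x) = 1`, `sgn(y) = −1`, `sgn(z) = 0`), then
`ρ_n(w) = ∑_{j=1}^{m} sgn(u_j) · x u_{j+1} ⋯ u_m z^n u₁ ⋯ u_{j−1} y`. -/
theorem rho_n_on_words (C : ∀ n : ℕ, H →ₗ[ℚ] TensorPower ℚ (n + 2) H) (hC : IsC C)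
    (n : ℕ) (m : ℕ) (u : Fin m → Fin 3) :
    Mn n (C n (List.ofFn fun j => (![Hx, Hy, Hz] : Fin 3 → H) (u j)).prod) =
      ∑ j : Fin m, (![(1 : ℚ), -1, 0]) (u j) •
        (Hx * ((List.ofFn fun t => (![Hx, Hy, Hz] : Fin 3 → H) (u t)).drop ((j : ℕ) + 1)).prod
          * Hz ^ n
          * ((List.ofFn fun t => (![Hx, Hy, Hz] : Fin 3 → H) (u t)).take (j : ℕ)).prod
          * Hy) := by
  rw [C_word C hC n m u, map_sum]
  apply Finset.sum_congr rfl
  intro j _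
  rw [map_smul, Mn_dia_xzy, ← mul_assoc]
end
end

section
/- For every n ≥ 0 and every w ∈ H, one has ρ_{n+1}(w) = ρ_n(zw). -/
noncomputable section

open Finset

section RhoAux

open scoped TensorProduct

/-- The coordinate function of the pure tensor `u ⊗ z^{⊗n} ⊗ v`. -/
def Jfun (n : ℕ) (u v : H) : Fin (n + 2) → H :=
  fun i => if i = 0 then u else if i = Fin.last (n + 1) then v else Hz

lemma zero_ne_last (n : ℕ) : (0 : Fin (n + 2)) ≠ Fin.last (n + 1) := by
  simp [Fin.ext_iff]

lemma Jfun_update₁ (n : ℕ) (u v : H) :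
    Jfun n u v = Function.update (Jfun n 0 v) 0 u := by
  funext i
  simp only [Jfun, Function.update_apply]
  by_cases h : i = 0 <;> simp [h]

lemma Jfun_update₂ (n : ℕ) (u v : H) :
    Jfun n u v = Function.update (Jfun n u 0) (Fin.last (n + 1)) v := by
  funext i
  simp only [Jfun, Function.update_apply]
  by_cases h : i = 0
  · simp [h, (zero_ne_last n).symm, zero_ne_last n]
  · by_cases h' : i = Fin.last (n + 1) <;> simp [h, h']

/-- The bilinear map `(u, v) ↦ u ⊗ z^{⊗n} ⊗ v`. -/
def Jb (n : ℕ) : H →ₗ[ℚ] H →ₗ[ℚ] TensorPower ℚ (n + 2) H :=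
  LinearMap.mk₂ ℚ (fun u v => PiTensorProduct.tprod ℚ (Jfun n u v))
    (fun u u' v => by
      rw [Jfun_update₁ n (u + u') v, Jfun_update₁ n u v, Jfun_update₁ n u' v,
        MultilinearMap.map_update_add])
    (fun c u v => by
      rw [Jfun_update₁ n (c • u) v, Jfun_update₁ n u v, MultilinearMap.map_update_smul])
    (fun u v v' => by
      rw [Jfun_update₂ n u (v + v'), Jfun_update₂ n u v, Jfun_update₂ n u v',
        MultilinearMap.map_update_add])
    (fun c u v => by
      rw [Jfun_update₂ n u (c • v), Jfun_update₂ n u v, MultilinearMap.map_update_smul])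

/-- The linear map `H ⊗ H → H^{⊗(n+2)}`, `u ⊗ v ↦ u ⊗ z^{⊗n} ⊗ v`. -/
def J (n : ℕ) : H ⊗[ℚ] H →ₗ[ℚ] TensorPower ℚ (n + 2) H := TensorProduct.lift (Jb n)

lemma J_tmul (n : ℕ) (u v : H) :
    J n (u ⊗ₜ[ℚ] v) = PiTensorProduct.tprod ℚ (Jfun n u v) := rfl

/-- The map `u ⊗ v ↦ ub ⊗ av` on `H ⊗ H`. -/
def tau (a b : H) : H ⊗[ℚ] H →ₗ[ℚ] H ⊗[ℚ] H :=
  TensorProduct.map (LinearMap.mulRight ℚ b) (LinearMap.mulLeft ℚ a)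

lemma dia_J (n : ℕ) (a b : H) (s : H ⊗[ℚ] H) :
    dia n a (J n s) b = J n (tau a b s) := by
  induction s using TensorProduct.induction_on with
  | zero => simp only [dia, map_zero]
  | tmul u v =>
      rw [J_tmul, dia, PiTensorProduct.map_tprod, tau, TensorProduct.map_tmul, J_tmul]
      congr 1
      funext i
      by_cases h : i = 0
      · simp [h, Jfun, (zero_ne_last n).symm, zero_ne_last n]
      · by_cases h' : i = Fin.last (n + 1) <;> simp [h, h', Jfun]
  | add s t hs ht =>
      simp only [dia] at hs ht ⊢
      simp only [map_add, hs, ht]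

lemma tail_prod (n : ℕ) (v : H) :
    (List.ofFn fun i : Fin (n + 1) => if i = Fin.last n then v else Hz).prod = Hz ^ n * v := by
  induction n with
  | zero => simp
  | succ n ih =>
      rw [List.ofFn_succ]
      have h0 : (0 : Fin (n + 2)) ≠ Fin.last (n + 1) := zero_ne_last n
      have htail : (fun i : Fin (n + 1) =>
          if (Fin.succ i) = Fin.last (n + 1) then v else Hz)
          = fun i => if i = Fin.last n then v else Hz := by
        funext i
        by_cases h : i = Fin.last n
        · simp [h]
        · rw [if_neg h, if_neg]
          intro hc
          exact h (by simpa [Fin.ext_iff] using hc)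
      rw [List.prod_cons, if_neg h0, htail, ih, pow_succ']
      rw [mul_assoc]

lemma Mn_J (n : ℕ) (u v : H) : Mn n (J n (u ⊗ₜ[ℚ] v)) = u * Hz ^ n * v := by
  rw [J_tmul, Mn, PiTensorProduct.lift.tprod, MultilinearMap.mkPiAlgebraFin_apply,
    List.ofFn_succ]
  have h0 : Jfun n u v 0 = u := by simp [Jfun]
  have htail : (fun i : Fin (n + 1) => Jfun n u v (Fin.succ i))
      = fun i => if i = Fin.last n then v else Hz := by
    funext i
    simp only [Jfun, if_neg (Fin.succ_ne_zero i)]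
    by_cases h : i = Fin.last n
    · simp [h]
    · rw [if_neg h, if_neg]
      intro hc
      exact h (by simpa [Fin.ext_iff] using hc)
  rw [List.prod_cons, h0, htail, tail_prod, mul_assoc]

lemma C_exists (C : ∀ n : ℕ, H →ₗ[ℚ] TensorPower ℚ (n + 2) H) (hC : IsC C) (n : ℕ) (w : H) :
    ∃ s : H ⊗[ℚ] H, C n w = J n s ∧ C (n + 1) w = J (n + 1) s := by
  induction w using FreeAlgebra.induction with
  | grade0 r =>
      refine ⟨0, ?_, ?_⟩ <;>
      · rw [Algebra.algebraMap_eq_smul_one, map_smul]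
        simp [(hC _).1]
  | grade1 x =>
      fin_cases x
      · refine ⟨Hx ⊗ₜ[ℚ] Hy, ?_, ?_⟩ <;>
        · show C _ Hx = _
          rw [(hC _).2.1]
          rfl
      · refine ⟨-(Hx ⊗ₜ[ℚ] Hy), ?_, ?_⟩ <;>
        · show C _ Hy = _
          rw [(hC _).2.2.1, map_neg]
          rfl
  | mul w w' hw hw' =>
      obtain ⟨s, hs1, hs2⟩ := hw
      obtain ⟨t, ht1, ht2⟩ := hw'
      refine ⟨tau 1 w' s + tau w 1 t, ?_, ?_⟩
      · rw [(hC n).2.2.2 w w', hs1, ht1, dia_J, dia_J, map_add]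
      · rw [(hC (n + 1)).2.2.2 w w', hs2, ht2, dia_J, dia_J, map_add]
  | add w w' hw hw' =>
      obtain ⟨s, hs1, hs2⟩ := hw
      obtain ⟨t, ht1, ht2⟩ := hw'
      exact ⟨s + t, by rw [map_add, hs1, ht1, map_add],
        by rw [map_add, hs2, ht2, map_add]⟩

lemma Mn_J_shift (n : ℕ) (s : H ⊗[ℚ] H) :
    Mn (n + 1) (J (n + 1) s) = Mn n (J n (tau Hz 1 s)) := by
  induction s using TensorProduct.induction_on with
  | zero => simp only [map_zero]
  | tmul u v =>
      rw [Mn_J, tau, TensorProduct.map_tmul]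
      simp only [LinearMap.mulRight_apply, LinearMap.mulLeft_apply]
      rw [Mn_J, mul_one, pow_succ]
      simp only [mul_assoc]
  | add s t hs ht => simp only [map_add, hs, ht]

end RhoAux

/-- `ρ_{n+1}(w) = ρ_n(zw)` for all `n ≥ 0` and `w ∈ H`. -/
theorem rho_succ_eq_rho_z_mul (C : ∀ n : ℕ, H →ₗ[ℚ] TensorPower ℚ (n + 2) H) (hC : IsC C)
    (n : ℕ) (w : H) :
    Mn (n + 1) (C (n + 1) w) = Mn n (C n (Hz * w)) := by
  obtain ⟨s, hs1, hs2⟩ := C_exists C hC n w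
  have hz : C n Hz = 0 := by
    rw [Hz, map_add, (hC n).2.1, (hC n).2.2.1, add_neg_cancel]
  have d0 : dia n 1 (0 : TensorPower ℚ (n + 2) H) w = 0 := by
    simp only [dia, map_zero]
  rw [hs2, (hC n).2.2.2 Hz w, hz, d0, zero_add, hs1, dia_J, Mn_J_shift]
end
end

section
/- For every integer k ≥ 2 there is the chain of inclusions of ℚ-vector subspaces {0} = ρ_{k−2}(Ȟ¹₁) ⊆ ρ_{k−3}(Ȟ¹₂) ⊆ ⋯ ⊆ ρ₁(Ȟ¹_{k−2}) ⊆ ρ₀(Ȟ¹_{k−1}); that is, ρ_{n+1}(Ȟ¹_{k−n−2}) ⊆ ρ_n(Ȟ¹_{k−n−1}) for every n ∈ {0, 1, …, k−3}. -/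
noncomputable section

open Finset

namespace RhoStrat

open PiTensorProduct

/-- The family of linear maps defining `dia`. -/
def diaFam (n : ℕ) (a b : H) : Fin (n + 2) → H →ₗ[ℚ] H := fun i =>
  if i = 0 then LinearMap.mulRight ℚ b
    else if i = Fin.last (n + 1) then LinearMap.mulLeft ℚ a
    else LinearMap.id

lemma dia_eq (n : ℕ) (a : H) (t : TensorPower ℚ (n + 2) H) (b : H) :
    dia n a t b = PiTensorProduct.map (diaFam n a b) t := rfl

/-- Insert `Hz` before the last slot. -/
def insFun (n : ℕ) (v : Fin (n + 2) → H) : Fin (n + 3) → H :=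
  Fin.snoc (Fin.snoc (Fin.init v) Hz) (v (Fin.last (n + 1)))

lemma insFun_update (n : ℕ) [inst : DecidableEq (Fin (n + 2))] (v : Fin (n + 2) → H)
    (i : Fin (n + 2)) :
    ∃ i' : Fin (n + 3), ∀ x : H,
      insFun n (Function.update v i x) = Function.update (insFun n v) i' x := by
  have hinst : inst = instDecidableEqFin (n + 2) := Subsingleton.elim _ _
  subst hinst
  rcases Fin.eq_castSucc_or_eq_last i with ⟨j, rfl⟩ | rfl
  · refine ⟨j.castSucc.castSucc, fun x => ?_⟩
    unfold insFun
    rw [Fin.init_update_castSucc, Function.update_of_ne (Fin.castSucc_lt_last j).ne',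
      Fin.snoc_update, Fin.snoc_update]
  · refine ⟨Fin.last (n + 2), fun x => ?_⟩
    unfold insFun
    rw [Fin.init_update_last, Function.update_self, Fin.update_snoc_last]

/-- The multilinear map underlying `phi`. -/
def insMulti (n : ℕ) : MultilinearMap ℚ (fun _ : Fin (n + 2) => H) (TensorPower ℚ (n + 3) H) where
  toFun v := tprod ℚ (insFun n v)
  map_update_add' v i x y := by
    obtain ⟨i', h⟩ := insFun_update n v i
    rw [h, h, h]
    exact MultilinearMap.map_update_add _ _ _ _ _
  map_update_smul' v i c x := by
    obtain ⟨i', h⟩ := insFun_update n v i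
    rw [h, h]
    exact MultilinearMap.map_update_smul _ _ _ _ _

/-- `phi n : H^{⊗(n+2)} → H^{⊗(n+3)}` inserts `z` before the last slot. -/
def phi (n : ℕ) : TensorPower ℚ (n + 2) H →ₗ[ℚ] TensorPower ℚ (n + 3) H :=
  PiTensorProduct.lift (insMulti n)

lemma phi_tprod (n : ℕ) (v : Fin (n + 2) → H) :
    phi n (tprod ℚ v) = tprod ℚ (insFun n v) := by
  rw [phi, PiTensorProduct.lift.tprod]; rfl

lemma castSucc_last_ne_zero (n : ℕ) : (Fin.last (n + 1)).castSucc ≠ (0 : Fin (n + 3)) := by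
  simp [Fin.ext_iff]

lemma castSucc_last_ne_last (n : ℕ) :
    (Fin.last (n + 1)).castSucc ≠ Fin.last (n + 2) := (Fin.castSucc_lt_last _).ne

lemma castSucc_castSucc_ne_last (n : ℕ) (m : Fin (n + 1)) :
    m.castSucc.castSucc ≠ Fin.last (n + 2) := (Fin.castSucc_lt_last _).ne

lemma insFun_dia (n : ℕ) (a b : H) (v : Fin (n + 2) → H) :
    insFun n (fun i => diaFam n a b i (v i))
      = fun i => diaFam (n + 1) a b i (insFun n v i) := by
  funext i
  refine Fin.lastCases ?_ (fun j => ?_) i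
  · -- i = last (n+2)
    simp [insFun, diaFam, Fin.snoc_last, (Fin.last_pos (n := n + 2)).ne',
      (Fin.last_pos (n := n + 1)).ne']
  · refine Fin.lastCases ?_ (fun m => ?_) j
    · -- i = castSucc (last (n+1))
      simp [insFun, diaFam, Fin.snoc_castSucc, Fin.snoc_last, castSucc_last_ne_zero,
        castSucc_last_ne_last]
    · -- i = castSucc (castSucc m)
      have h1 : m.castSucc.castSucc = (0 : Fin (n + 3)) ↔ m.castSucc = (0 : Fin (n + 2)) := by
        exact Fin.castSucc_eq_zero_iff
      have h2 : m.castSucc ≠ Fin.last (n + 1) := (Fin.castSucc_lt_last _).ne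
      simp only [insFun, Fin.snoc_castSucc, Fin.init_def, diaFam,
        castSucc_castSucc_ne_last, if_neg (castSucc_castSucc_ne_last n m), if_neg h2]
      rcases eq_or_ne m.castSucc (0 : Fin (n + 2)) with h | h <;> simp [h1, h]

lemma phi_dia (n : ℕ) (a b : H) (t : TensorPower ℚ (n + 2) H) :
    phi n (dia n a t b) = dia (n + 1) a (phi n t) b := by
  rw [dia_eq, dia_eq]
  induction t using PiTensorProduct.induction_on with
  | smul_tprod r f =>
      rw [map_smul, map_smul, map_smul, map_smul, PiTensorProduct.map_tprod, phi_tprod,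
        phi_tprod, PiTensorProduct.map_tprod, insFun_dia]
  | add x y hx hy => rw [map_add, map_add, map_add, map_add, hx, hy]

lemma insFun_xzy (n : ℕ) :
    insFun n (fun i : Fin (n + 2) => if i = 0 then Hx else if i = Fin.last (n + 1) then Hy else Hz)
      = fun i : Fin (n + 3) => if i = 0 then Hx else if i = Fin.last (n + 2) then Hy else Hz := by
  funext i
  refine Fin.lastCases ?_ (fun j => ?_) i
  · simp [insFun, Fin.snoc_last, (Fin.last_pos (n := n + 2)).ne',
      (Fin.last_pos (n := n + 1)).ne']
  · refine Fin.lastCases ?_ (fun m => ?_) j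
    · simp [insFun, Fin.snoc_castSucc, Fin.snoc_last, castSucc_last_ne_zero,
        castSucc_last_ne_last]
    · have h1 : m.castSucc.castSucc = (0 : Fin (n + 3)) ↔ m.castSucc = (0 : Fin (n + 2)) := by
        exact Fin.castSucc_eq_zero_iff
      have h2 : m.castSucc ≠ Fin.last (n + 1) := (Fin.castSucc_lt_last _).ne
      simp only [insFun, Fin.snoc_castSucc, Fin.init_def,
        if_neg (castSucc_castSucc_ne_last n m), if_neg h2]
      rcases eq_or_ne m.castSucc (0 : Fin (n + 2)) with h | h <;> simp [h1, h]

lemma phi_xzy (n : ℕ) : phi n (xzy n) = xzy (n + 1) := by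
  unfold xzy
  rw [phi_tprod, insFun_xzy]

lemma C_succ (C : ∀ n : ℕ, H →ₗ[ℚ] TensorPower ℚ (n + 2) H) (hC : IsC C) (n : ℕ) (w : H) :
    C (n + 1) w = phi n (C n w) := by
  induction w using FreeAlgebra.induction with
  | grade0 r =>
      rw [Algebra.algebraMap_eq_smul_one, map_smul, map_smul, (hC (n + 1)).1, (hC n).1,
        smul_zero, smul_zero, map_zero]
  | grade1 i =>
      fin_cases i
      · show C (n + 1) Hx = phi n (C n Hx)
        rw [(hC (n + 1)).2.1, (hC n).2.1, phi_xzy]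
      · show C (n + 1) Hy = phi n (C n Hy)
        rw [(hC (n + 1)).2.2.1, (hC n).2.2.1, map_neg, phi_xzy]
  | mul a b ha hb =>
      rw [(hC (n + 1)).2.2.2 a b, (hC n).2.2.2 a b, map_add, phi_dia, phi_dia, ha, hb]
  | add a b ha hb =>
      rw [map_add, map_add, ha, hb, map_add]

lemma Mn_tprod (n : ℕ) (v : Fin (n + 2) → H) :
    Mn n (tprod ℚ v) = (List.ofFn v).prod := by
  rw [Mn, PiTensorProduct.lift.tprod, MultilinearMap.mkPiAlgebraFin_apply]

lemma Mn_phi (n : ℕ) (t : TensorPower ℚ (n + 2) H) :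
    Mn (n + 1) (phi n t) = Mn n (dia n Hz t 1) := by
  rw [dia_eq]
  induction t using PiTensorProduct.induction_on with
  | smul_tprod r v =>
      rw [map_smul, map_smul, map_smul, map_smul, phi_tprod, PiTensorProduct.map_tprod,
        Mn_tprod, Mn_tprod]
      congr 1
      have hupd : (fun i => diaFam n Hz 1 i (v i))
          = Function.update v (Fin.last (n + 1)) (Hz * v (Fin.last (n + 1))) := by
        funext i
        rcases eq_or_ne i (Fin.last (n + 1)) with rfl | hl
        · simp [diaFam, (Fin.last_pos (n := n + 1)).ne']
        · rcases eq_or_ne i 0 with rfl | h0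
          · simp [diaFam, Function.update_of_ne (Fin.last_pos (n := n + 1)).ne']
          · simp [diaFam, if_neg h0, if_neg hl, Function.update_of_ne hl]
      rw [hupd]
      rw [List.ofFn_succ' (insFun n v), List.ofFn_succ'
        (Function.update v (Fin.last (n + 1)) (Hz * v (Fin.last (n + 1))))]
      have e1 : (fun i : Fin (n + 2) => insFun n v i.castSucc)
          = Fin.snoc (Fin.init v) Hz := by
        funext i; exact Fin.snoc_castSucc _ _ _
      have e2 : insFun n v (Fin.last (n + 2)) = v (Fin.last (n + 1)) := Fin.snoc_last _ _
      have e3 : (fun i : Fin (n + 1) =>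
            Function.update v (Fin.last (n + 1)) (Hz * v (Fin.last (n + 1))) i.castSucc)
          = fun i : Fin (n + 1) => v i.castSucc := by
        funext i
        exact Function.update_of_ne (Fin.castSucc_lt_last i).ne _ _
      rw [e1, e2, e3, Function.update_self, List.ofFn_succ' (Fin.snoc (Fin.init v) Hz)]
      have e4 : (fun i : Fin (n + 1) => Fin.snoc (Fin.init v) Hz i.castSucc)
          = fun i : Fin (n + 1) => v i.castSucc := by
        funext i; exact Fin.snoc_castSucc _ _ _
      rw [e4, Fin.snoc_last]
      simp [List.prod_concat, mul_assoc]
  | add x y hx hy => simp only [map_add, hx, hy]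

lemma rho_succ (C : ∀ n : ℕ, H →ₗ[ℚ] TensorPower ℚ (n + 2) H) (hC : IsC C) (n : ℕ) (w : H) :
    Mn (n + 1) (C (n + 1) w) = Mn n (C n (Hz * w)) := by
  have h0 : C n Hz = 0 := by
    rw [show Hz = Hx + Hy from rfl, map_add, (hC n).2.1, (hC n).2.2.1, add_neg_cancel]
  rw [(hC n).2.2.2 Hz w, h0, C_succ C hC n w, Mn_phi]
  have : dia n 1 (0 : TensorPower ℚ (n + 2) H) w = 0 := by
    rw [dia_eq, map_zero]
  rw [this, zero_add]

lemma zw_one : zw 1 = Hy := by simp [zw]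

lemma Hx_mul_zw (m : ℕ) (hm : 1 ≤ m) : Hx * zw m = zw (m + 1) := by
  unfold zw
  rw [← mul_assoc, ← pow_succ']
  congr 2
  omega

lemma zwords_cons_one {l : ℕ} (kk : Fin (l + 1) → ℕ) :
    zwords (Fin.cons 1 kk : Fin (l + 1 + 1) → ℕ) = Hy * zwords kk := by
  unfold zwords
  rw [List.ofFn_succ]
  simp [Fin.cons_succ, zw_one]

lemma zwords_update {l : ℕ} (kk : Fin (l + 1) → ℕ) (h : 1 ≤ kk 0) :
    zwords (Function.update kk 0 (kk 0 + 1)) = Hx * zwords kk := by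
  unfold zwords
  rw [List.ofFn_succ, List.ofFn_succ, List.prod_cons, List.prod_cons]
  have e1 : ∀ i : Fin l, Function.update kk 0 (kk 0 + 1) i.succ = kk i.succ := fun i =>
    Function.update_of_ne (Fin.succ_ne_zero i) _ _
  simp only [e1, Function.update_self, ← mul_assoc]
  congr 1
  rw [Hx_mul_zw _ h]

end RhoStrat

/-- For `k ≥ 2`: `{0} = ρ_{k−2}(Ȟ¹₁)` and
`ρ_{n+1}(Ȟ¹_{k−n−2}) ⊆ ρ_n(Ȟ¹_{k−n−1})` for every `n ∈ {0, 1, …, k−3}`;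
that is, the chain
`{0} = ρ_{k−2}(Ȟ¹₁) ⊆ ρ_{k−3}(Ȟ¹₂) ⊆ ⋯ ⊆ ρ₀(Ȟ¹_{k−1})`. -/
theorem rho_stratification (k : ℕ) (hk : 2 ≤ k)
    (C : ∀ n : ℕ, H →ₗ[ℚ] TensorPower ℚ (n + 2) H) (hC : IsC C) :
    Submodule.map ((Mn (k - 2)).comp (C (k - 2))) (HcheckDeg 1) = ⊥ ∧
    ∀ n : ℕ, n + 3 ≤ k →
      Submodule.map ((Mn (n + 1)).comp (C (n + 1))) (HcheckDeg (k - n - 2)) ≤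
        Submodule.map ((Mn n).comp (C n)) (HcheckDeg (k - n - 1)) := by
  constructor
  · have h1 : HcheckDeg 1 = ⊥ := by
      rw [HcheckDeg, Submodule.span_eq_bot]
      rintro w ⟨l, kk, hk1, ⟨i0, hi0⟩, hsum, rfl⟩
      exfalso
      have hge : (l + 1 : ℕ) ≤ ∑ i, kk i := by
        calc (l + 1 : ℕ) = ∑ _i : Fin (l + 1), 1 := by simp
        _ ≤ ∑ i, kk i := Finset.sum_le_sum fun i _ => hk1 i
      have hle : l + 1 ≤ 1 := by rw [hsum] at hge; exact hge
      have hl : l = 0 := by omega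
      subst hl
      have hk0 : kk 0 = 1 := by rwa [Fin.sum_univ_one] at hsum
      exact hi0 (by rw [Fin.eq_zero i0]; exact hk0)
    rw [h1, Submodule.map_bot]
  · intro n hn
    have hd : k - n - 1 = (k - n - 2) + 1 := by omega
    rw [hd]
    set d := k - n - 2 with hdd
    rw [HcheckDeg, Submodule.map_span_le]
    rintro w ⟨l, kk, hk1, hne, hsum, rfl⟩
    have memx : Hx * zwords kk ∈ HcheckDeg (d + 1) := by
      apply Submodule.subset_span
      refine ⟨l, Function.update kk 0 (kk 0 + 1), ?_, ⟨0, ?_⟩, ?_, (RhoStrat.zwords_update kk (hk1 0)).symm⟩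
      · intro i
        rcases eq_or_ne i 0 with rfl | h
        · simp
        · rw [Function.update_of_ne h]; exact hk1 i
      · have := hk1 0; simp; omega
      · rw [Finset.sum_update_of_mem (Finset.mem_univ 0), Finset.sdiff_singleton_eq_erase]
        rw [← Finset.add_sum_erase _ kk (Finset.mem_univ 0)] at hsum
        omega
    have memy : Hy * zwords kk ∈ HcheckDeg (d + 1) := by
      apply Submodule.subset_span
      refine ⟨l + 1, Fin.cons 1 kk, ?_, ?_, ?_, (RhoStrat.zwords_cons_one kk).symm⟩
      · intro i
        refine Fin.cases ?_ (fun j => ?_) i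
        · simp
        · simpa [Fin.cons_succ] using hk1 j
      · obtain ⟨i, hi⟩ := hne
        exact ⟨i.succ, by simpa [Fin.cons_succ] using hi⟩
      · rw [Fin.sum_cons]
        omega
    have key : ((Mn (n + 1)).comp (C (n + 1))) (zwords kk)
        = ((Mn n).comp (C n)) (Hx * zwords kk + Hy * zwords kk) := by
      simp only [LinearMap.comp_apply]
      rw [RhoStrat.rho_succ C hC n (zwords kk)]
      congr 2
      rw [show Hz = Hx + Hy from rfl, add_mul]
    rw [key]
    exact Submodule.mem_map_of_mem (Submodule.add_mem _ memx memy)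
end
end

section
/- For every l ≥ 1, if (u₁,…,u_l), (v₁,…,v_l) ∈ {y,z}^l are cyclically equivalent (i.e., (v₁,…,v_l) = (u_{j+1},…,u_{j+l}) for some j, indices mod l), then ρ₀(u₁⋯u_l) = ρ₀(v₁⋯v_l); hence ρ₀ induces a well-defined map ρ̃₀ : Y_l → H on cyclic equivalence classes. -/
noncomputable section

open Finset

lemma Mn_dia_key (a b : H) (t : TensorPower ℚ 2 H) :
    Mn 0 (dia 0 a t b) = Mn 0 (dia 0 1 t (b * a)) := by
  induction t using PiTensorProduct.induction_on with
  | smul_tprod c f =>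
      simp only [dia, map_smul, PiTensorProduct.map_tprod, Mn, PiTensorProduct.lift.tprod,
        MultilinearMap.mkPiAlgebraFin_apply]
      congr 1
      have h0 : (List.ofFn fun i : Fin 2 =>
          (if i = 0 then LinearMap.mulRight ℚ b
            else if i = Fin.last 1 then LinearMap.mulLeft ℚ a else LinearMap.id) (f i)).prod
          = (f 0 * b) * (a * f 1) := by
        simp [List.ofFn_succ, Fin.last]
      have h1 : (List.ofFn fun i : Fin 2 =>
          (if i = 0 then LinearMap.mulRight ℚ (b * a)
            else if i = Fin.last 1 then LinearMap.mulLeft ℚ 1 else LinearMap.id) (f i)).prod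
          = (f 0 * (b * a)) * f 1 := by
        simp [List.ofFn_succ, Fin.last, mul_assoc]
      rw [h0, h1]
      simp only [mul_assoc]
  | add x y hx hy =>
      simp only [dia, map_add] at hx hy ⊢
      rw [hx, hy]

/-- If two `{y,z}`-tuples (encoded by `Fin 2`: `0 ↦ y`, `1 ↦ z`) are cyclically
equivalent, then `ρ₀(u₁⋯u_l) = ρ₀(v₁⋯v_l)`; hence `ρ₀` induces a well-defined
map `ρ̃₀` on cyclic equivalence classes. -/
theorem rho0_cyclic_invariant (l : ℕ) (hl : 1 ≤ l)
    (C : ∀ n : ℕ, H →ₗ[ℚ] TensorPower ℚ (n + 2) H) (hC : IsC C)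
    (u v : Fin l → Fin 2) (h : cycRel l u v) :
    Mn 0 (C 0 (wprod u)) = Mn 0 (C 0 (wprod v)) := by
  obtain ⟨j, hj⟩ := h
  have key : ∀ a b : H, Mn 0 (C 0 (a * b)) = Mn 0 (C 0 (b * a)) := by
    intro a b
    have hmul := (hC 0).2.2.2
    rw [hmul a b, hmul b a, map_add, map_add,
      Mn_dia_key a (1 : H), Mn_dia_key b (1 : H), one_mul, one_mul, add_comm]
  have hrot : ∀ (L : List H) (n : ℕ), Mn 0 (C 0 (L.rotate n).prod) = Mn 0 (C 0 L.prod) := by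
    intro L n
    rcases eq_or_ne L [] with rfl | hL
    · simp
    · have hlen : 0 < L.length := List.length_pos_iff.mpr hL
      have hm : n % L.length ≤ L.length := le_of_lt (Nat.mod_lt _ hlen)
      rw [← List.rotate_mod, List.rotate_eq_drop_append_take hm, List.prod_append,
        key, ← List.prod_append, List.take_append_drop]
  have hlist : (List.ofFn fun t => yz (v t)) = (List.ofFn fun t => yz (u t)).rotate j := by
    apply List.ext_getElem
    · simp
    · intro i h1 h2
      have hlu : (List.ofFn fun t => yz (u t)).length = l := by simp
      have hil : i < l := by simpa using h1
      rw [List.getElem_rotate]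
      simp only [List.getElem_ofFn]
      congr 1
      rw [hj]
      congr 1
      rw [Fin.add_def]
      ext
      simp [hlu]
  unfold wprod
  rw [hlist, hrot]
end
end

section
/- Let l ≥ 1, n ∈ {0, 1, …, l}, and let m be a positive divisor of l. Then #{u ∈ X_{l,n} : m·u = u} = 2^m − L^n_m, where m·u denotes the action of m ∈ ℤ/lℤ on u by cyclic shift. -/
noncomputable section

open Finset

namespace CardAux

open Fin.NatCast


/-- extension of a word by zeros -/
def wext {s : ℕ} (w : Fin s → Fin 2) (a : ℕ) : Fin 2 := if h : a < s then w ⟨a, h⟩ else 0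

def Avoid (n s : ℕ) (f : ℕ → Fin 2) : Prop :=
  ∀ i, i < s → i + n ≤ s → ∃ t, t < n ∧ f (i + t) = 0

def EndsZ (n s : ℕ) (w : Fin s → Fin 2) : Prop :=
  Avoid n s (wext w) ∧ (s = 0 ∨ wext w (s - 1) = 0)

instance (n s : ℕ) : DecidablePred (EndsZ n s) := fun w => by
  unfold EndsZ Avoid; exact instDecidableAnd

def TS (n s : ℕ) : Finset (Fin s → Fin 2) := univ.filter (EndsZ n s)

def cyc (m : ℕ) [NeZero m] (v : Fin m → Fin 2) (a : ℕ) : Fin 2 := v (a : Fin m)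

def GoodP (n m : ℕ) [NeZero m] (v : Fin m → Fin 2) : Prop :=
  ∃ j, j < m ∧ ∀ t, t < n → cyc m v (t + j) = 1

instance (n m : ℕ) [NeZero m] : DecidablePred (GoodP n m) := fun v =>
  decidable_of_iff (∃ j ∈ Finset.range m, ∀ t ∈ Finset.range n, cyc m v (t + j) = 1)
    (by simp [GoodP, Finset.mem_range])

def CS (n m : ℕ) [NeZero m] : Finset (Fin m → Fin 2) :=
  univ.filter (fun v => ¬ GoodP n m v)

lemma fin2_one {x : Fin 2} (h : x ≠ 0) : x = 1 := by omega

lemma fin2_ne {x : Fin 2} (h : x = 1) : x ≠ 0 := by omega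

section Cyc
variable {m : ℕ} [NeZero m]

lemma mpos : 0 < m := Nat.pos_of_ne_zero (NeZero.ne m)

lemma cyc_mod (v : Fin m → Fin 2) (a : ℕ) : cyc m v a = cyc m v (a % m) := by
  unfold cyc; congr 1; apply Fin.ext
  rw [Fin.val_natCast, Fin.val_natCast, Nat.mod_mod_of_dvd a dvd_rfl]

lemma cyc_congr (v : Fin m → Fin 2) {a b : ℕ} (h : a % m = b % m) :
    cyc m v a = cyc m v b := by rw [cyc_mod v a, h, ← cyc_mod]

lemma cyc_small (v : Fin m → Fin 2) {a : ℕ} (h : a < m) : cyc m v a = v ⟨a, h⟩ := by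
  unfold cyc; congr 1; apply Fin.ext
  rw [Fin.val_natCast]; exact Nat.mod_eq_of_lt h

/-- first zero position (or `m`) -/
def kf (v : Fin m → Fin 2) : ℕ :=
  Nat.find (⟨m, Or.inl rfl⟩ : ∃ a, a = m ∨ cyc m v a = 0)

/-- length of the run of ones ending at position `m-1` -/
def rf (v : Fin m → Fin 2) : ℕ :=
  Nat.find (⟨m, Or.inl rfl⟩ : ∃ b, b = m ∨ cyc m v (m - 1 - b) = 0)

variable {v : Fin m → Fin 2}

lemma kf_lt (h : ∃ a, a < m ∧ cyc m v a = 0) : kf v < m := by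
  obtain ⟨a, ham, haz⟩ := h
  exact lt_of_le_of_lt (Nat.find_min' _ (Or.inr haz)) ham

lemma kf_zero (h : ∃ a, a < m ∧ cyc m v a = 0) : cyc m v (kf v) = 0 := by
  have h1 := kf_lt (v := v) h
  rw [kf] at h1 ⊢
  obtain h2 | h2 := Nat.find_spec (⟨m, Or.inl rfl⟩ : ∃ a, a = m ∨ cyc m v a = 0)
  · omega
  · exact h2

lemma kf_ones {a : ℕ} (ha : a < kf v) : cyc m v a = 1 := by
  have := Nat.find_min (⟨m, Or.inl rfl⟩ : ∃ a, a = m ∨ cyc m v a = 0) ha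
  push_neg at this
  exact fin2_one this.2

lemma rf_le (h : ∃ a, a < m ∧ cyc m v a = 0) : rf v ≤ m - 1 - kf v := by
  apply Nat.find_min'
  right
  have h1 : kf v < m := kf_lt h
  have h2 : m - 1 - (m - 1 - kf v) = kf v := by omega
  rw [h2]; exact kf_zero h

lemma rf_zero (h : ∃ a, a < m ∧ cyc m v a = 0) : cyc m v (m - 1 - rf v) = 0 := by
  have h1 := rf_le h
  have h2 := kf_lt (v := v) h
  rw [rf] at h1 ⊢
  obtain h3 | h3 := Nat.find_spec (⟨m, Or.inl rfl⟩ : ∃ b, b = m ∨ cyc m v (m - 1 - b) = 0)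
  · omega
  · exact h3

lemma rf_ones {b : ℕ} (hb : b < rf v) : cyc m v (m - 1 - b) = 1 := by
  have := Nat.find_min (⟨m, Or.inl rfl⟩ : ∃ b, b = m ∨ cyc m v (m - 1 - b) = 0) hb
  push_neg at this
  exact fin2_one this.2

lemma hasZero_of_notGood {n : ℕ} (hg : ¬ GoodP n m v) : ∃ a, a < m ∧ cyc m v a = 0 := by
  by_contra h
  push_neg at h
  apply hg
  refine ⟨0, mpos, fun t _ => ?_⟩
  rw [cyc_mod]
  exact fin2_one (h _ (Nat.mod_lt _ mpos))

lemma kfrf_bound {n : ℕ} (hg : ¬ GoodP n m v) : kf v + rf v + 1 ≤ n := by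
  by_contra hc
  push_neg at hc
  have h0 := hasZero_of_notGood hg
  have hk : kf v < m := kf_lt h0
  have hr : rf v ≤ m - 1 - kf v := rf_le h0
  apply hg
  refine ⟨(m - rf v) % m, Nat.mod_lt _ mpos, fun t ht => ?_⟩
  have e1 : (t + (m - rf v) % m) % m = (t + (m - rf v)) % m := by
    conv_lhs => rw [Nat.add_mod, Nat.mod_mod_of_dvd _ dvd_rfl, ← Nat.add_mod]
  rw [cyc_congr v e1]
  by_cases htr : t < rf v
  · have e2 : t + (m - rf v) = m - 1 - (rf v - 1 - t) := by omega
    rw [e2]; exact rf_ones (by omega)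
  · have e3 : (t + (m - rf v)) % m = (t - rf v) % m := by
      have e4 : t + (m - rf v) = m + (t - rf v) := by omega
      rw [e4, Nat.add_mod_left]
    rw [cyc_congr v e3]
    exact kf_ones (by omega)

end Cyc

/-- the cyclic reconstruction map -/
def reconC (m k r : ℕ) {s : ℕ} (w : Fin s → Fin 2) : Fin m → Fin 2 := fun a =>
  if a.val < k then (1 : Fin 2) else if a.val = k then 0
  else if a.val < m - r then wext w (a.val - (k + 1)) else 1

lemma reconC_val {m k r s : ℕ} [NeZero m] (w : Fin s → Fin 2) {a : ℕ} (ha : a < m) :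
    cyc m (reconC m k r w) a =
      (if a < k then (1 : Fin 2) else if a = k then 0
        else if a < m - r then wext w (a - (k + 1)) else 1) := by
  rw [cyc_small _ ha]; rfl

section Fiber

variable {n m k r : ℕ} [NeZero m]
variable (hn1 : 1 ≤ n) (hnm : n < m) (hkr : k + r + 1 ≤ n)

/-- restriction map -/
def cutC (m k : ℕ) [NeZero m] {s : ℕ} (v : Fin m → Fin 2) : Fin s → Fin 2 :=
  fun idx => cyc m v (k + 1 + idx.val)

include hnm hkr in
lemma cutC_mem {v : Fin m → Fin 2} (hg : ¬ GoodP n m v) (hk : kf v = k) (hr : rf v = r) :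
    (cutC m k (s := m - 1 - k - r) v) ∈ TS n (m - 1 - k - r) := by
  have h0 := hasZero_of_notGood hg
  have hs1 : 1 ≤ m - 1 - k - r := by omega
  rw [TS, mem_filter]
  refine ⟨mem_univ _, ?_, Or.inr ?_⟩
  · intro i hi hins
    by_contra hno
    push_neg at hno
    apply hg
    refine ⟨k + 1 + i, by omega, fun t ht => ?_⟩
    have h1 : t + (k + 1 + i) = k + 1 + (i + t) := by omega
    rw [h1]
    have h2 : i + t < m - 1 - k - r := by omega
    have h3 : wext (cutC m k (s := m - 1 - k - r) v) (i + t) = cyc m v (k + 1 + (i + t)) := by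
      unfold wext; rw [dif_pos h2]; rfl
    rw [← h3]
    exact fin2_one (hno t ht)
  · have h4 : m - 1 - k - r - 1 < m - 1 - k - r := by omega
    have h5 : wext (cutC m k (s := m - 1 - k - r) v) (m - 1 - k - r - 1) = cyc m v (k + 1 + (m - 1 - k - r - 1)) := by
      unfold wext; rw [dif_pos h4]; rfl
    rw [h5]
    have h6 : k + 1 + (m - 1 - k - r - 1) = m - 1 - r := by omega
    rw [h6, ← hr]
    exact rf_zero h0

include hn1 hnm hkr in
lemma reconC_notGood {w : Fin (m - 1 - k - r) → Fin 2} (hw : w ∈ TS n (m - 1 - k - r)) :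
    ¬ GoodP n m (reconC m k r w) := by
  have hs1 : 1 ≤ m - 1 - k - r := by omega
  rw [TS, mem_filter] at hw
  obtain ⟨-, hav, hend⟩ := hw
  have hend' : wext w (m - 1 - k - r - 1) = 0 := hend.resolve_left (by omega)
  have hz1 : cyc m (reconC m k r w) k = 0 := by
    rw [reconC_val w (by omega : k < m), if_neg (lt_irrefl k), if_pos rfl]
  have hz2 : cyc m (reconC m k r w) (m - 1 - r) = 0 := by
    rw [reconC_val w (by omega : m - 1 - r < m), if_neg (by omega), if_neg (by omega),
      if_pos (by omega)]
    have : m - 1 - r - (k + 1) = m - 1 - k - r - 1 := by omega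
    rw [this]; exact hend'
  rintro ⟨j, hj, hones⟩
  by_cases hA : j + n ≤ m
  · -- no wraparound
    have hjk : k < j := by
      by_contra hjk
      push_neg at hjk
      have ht : k - j < n := by omega
      have := hones (k - j) ht
      rw [(by omega : k - j + j = k), hz1] at this
      exact absurd this (by decide)
    have hjr : j + n ≤ m - 1 - r := by
      by_contra hjr
      push_neg at hjr
      by_cases hj2 : j ≤ m - 1 - r
      · have ht : m - 1 - r - j < n := by omega
        have := hones (m - 1 - r - j) ht
        rw [(by omega : m - 1 - r - j + j = m - 1 - r), hz2] at this
        exact absurd this (by decide)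
      · omega
    obtain ⟨t, ht, hwz⟩ := hav (j - k - 1) (by omega) (by omega)
    have := hones t ht
    rw [reconC_val w (by omega : t + j < m), if_neg (by omega), if_neg (by omega),
      if_pos (by omega)] at this
    rw [(by omega : t + j - (k + 1) = j - k - 1 + t), hwz] at this
    exact absurd this (by decide)
  · -- wraparound
    push_neg at hA
    have hB1 : n ≤ k + m - j := by
      by_contra hB1
      push_neg at hB1
      have := hones (k + m - j) (by omega)
      rw [(by omega : k + m - j + j = k + m)] at this
      rw [cyc_congr (reconC m k r w) (by rw [Nat.add_mod_right] : (k + m) % m = k % m), hz1] at this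
      exact absurd this (by decide)
    have hB2 : m - j ≤ r := by
      by_contra hB2
      push_neg at hB2
      have := hones (m - 1 - r - j) (by omega)
      rw [(by omega : m - 1 - r - j + j = m - 1 - r), hz2] at this
      exact absurd this (by decide)
    omega

include hn1 hnm hkr in
lemma reconC_kf_rf {w : Fin (m - 1 - k - r) → Fin 2} (hw : w ∈ TS n (m - 1 - k - r)) :
    kf (reconC m k r w) = k ∧ rf (reconC m k r w) = r := by
  have hs1 : 1 ≤ m - 1 - k - r := by omega
  rw [TS, mem_filter] at hw
  obtain ⟨-, hav, hend⟩ := hw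
  have hend' : wext w (m - 1 - k - r - 1) = 0 := hend.resolve_left (by omega)
  have hz1 : cyc m (reconC m k r w) k = 0 := by
    rw [reconC_val w (by omega : k < m), if_neg (lt_irrefl k), if_pos rfl]
  have hz2 : cyc m (reconC m k r w) (m - 1 - r) = 0 := by
    rw [reconC_val w (by omega : m - 1 - r < m), if_neg (by omega), if_neg (by omega),
      if_pos (by omega)]
    have : m - 1 - r - (k + 1) = m - 1 - k - r - 1 := by omega
    rw [this]; exact hend'
  constructor
  · rw [kf, Nat.find_eq_iff]
    refine ⟨Or.inr hz1, fun a ha => ?_⟩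
    rintro (rfl | haz)
    · omega
    · rw [reconC_val w (by omega : a < m), if_pos (by omega)] at haz
      exact absurd haz (by decide)
  · rw [rf, Nat.find_eq_iff]
    refine ⟨Or.inr hz2, fun b hb => ?_⟩
    rintro (rfl | hbz)
    · omega
    · rw [reconC_val w (by omega : m - 1 - b < m), if_neg (by omega), if_neg (by omega),
        if_neg (by omega)] at hbz
      exact absurd hbz (by decide)

include hn1 hnm hkr in
lemma reconC_cutC {v : Fin m → Fin 2} (hg : ¬ GoodP n m v) (hk : kf v = k) (hr : rf v = r) :
    reconC m k r (cutC m k (s := m - 1 - k - r) v) = v := by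
  have h0 := hasZero_of_notGood hg
  have hs1 : 1 ≤ m - 1 - k - r := by omega
  funext a
  have hva : cyc m v a.val = v a := by rw [cyc_small v a.isLt]
  show (if a.val < k then (1 : Fin 2) else if a.val = k then 0
      else if a.val < m - r then wext (cutC m k (s := m - 1 - k - r) v) (a.val - (k + 1)) else 1) = v a
  by_cases h1 : a.val < k
  · rw [if_pos h1, ← hva]
    exact (kf_ones (by omega)).symm
  · rw [if_neg h1]
    by_cases h2 : a.val = k
    · rw [if_pos h2, ← hva, h2, ← hk]
      exact (kf_zero h0).symm
    · rw [if_neg h2]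
      by_cases h3 : a.val < m - r
      · rw [if_pos h3]
        have h4 : a.val - (k + 1) < m - 1 - k - r := by omega
        have h5 : wext (cutC m k (s := m - 1 - k - r) v) (a.val - (k + 1))
            = cyc m v (k + 1 + (a.val - (k + 1))) := by
          unfold wext; rw [dif_pos h4]; rfl
        rw [h5, (by omega : k + 1 + (a.val - (k + 1)) = a.val), hva]
      · rw [if_neg h3, ← hva]
        have h6 : a.val = m - 1 - (m - 1 - a.val) := by have := a.isLt; omega
        rw [h6]
        exact (rf_ones (by rw [hr] at *; have := a.isLt; omega)).symm

include hn1 hnm hkr in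
lemma cutC_reconC {w : Fin (m - 1 - k - r) → Fin 2} :
    cutC m k (s := m - 1 - k - r) (reconC m k r w) = w := by
  funext idx
  have h1 : k + 1 + idx.val < m := by have := idx.isLt; omega
  show cyc m (reconC m k r w) (k + 1 + idx.val) = w idx
  rw [reconC_val w h1, if_neg (by omega), if_neg (by omega),
    if_pos (by have := idx.isLt; omega)]
  have h2 : k + 1 + idx.val - (k + 1) = idx.val := by omega
  rw [h2]
  unfold wext
  rw [dif_pos idx.isLt]

end Fiber

section CycCount
variable {n m : ℕ} [NeZero m]

lemma fiber_card (hn1 : 1 ≤ n) (hnm : n < m) {k r : ℕ} (hkr : k + r + 1 ≤ n) :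
    ((CS n m).filter (fun v => (kf v, rf v) = (k, r))).card = (TS n (m - 1 - k - r)).card := by
  apply Finset.card_nbij' (i := cutC m k (s := m - 1 - k - r)) (j := reconC m k r)
  · intro v hv
    rw [mem_coe, mem_filter, Prod.mk.injEq] at hv
    obtain ⟨hv1, hk, hr⟩ := hv
    rw [CS, mem_filter] at hv1
    exact cutC_mem hnm hkr hv1.2 hk hr
  · intro w hw
    rw [mem_coe, mem_filter, Prod.mk.injEq]
    have hng := reconC_notGood hn1 hnm hkr hw
    have hkr2 := reconC_kf_rf hn1 hnm hkr hw
    exact ⟨by rw [CS, mem_filter]; exact ⟨mem_univ _, hng⟩, hkr2.1, hkr2.2⟩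
  · intro v hv
    rw [mem_coe, mem_filter, Prod.mk.injEq] at hv
    obtain ⟨hv1, hk, hr⟩ := hv
    rw [CS, mem_filter] at hv1
    exact reconC_cutC hn1 hnm hkr hv1.2 hk hr
  · intro w _
    exact cutC_reconC hn1 hnm hkr

lemma CS_card_sum (hn1 : 1 ≤ n) (hnm : n < m) :
    (CS n m).card = ∑ p ∈ ((range n ×ˢ range n).filter (fun p => p.1 + p.2 + 1 ≤ n)),
      (TS n (m - 1 - p.1 - p.2)).card := by
  rw [Finset.card_eq_sum_card_fiberwise
    (f := fun v => (kf v, rf v))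
    (t := (range n ×ˢ range n).filter (fun p => p.1 + p.2 + 1 ≤ n))]
  · apply Finset.sum_congr rfl
    intro p hp
    rw [mem_filter, mem_product, mem_range, mem_range] at hp
    exact fiber_card hn1 hnm (k := p.1) (r := p.2) hp.2
  · intro v hv
    rw [CS, mem_coe, mem_filter] at hv
    have hb := kfrf_bound (n := n) hv.2
    rw [mem_coe, mem_filter, mem_product, mem_range, mem_range]
    dsimp only
    omega

end CycCount

section LinCount
variable {n s : ℕ}

/-- first zero position (or `s`) in a linear word -/
def jf {s : ℕ} (w : Fin s → Fin 2) : ℕ :=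
  Nat.find (⟨s, Or.inl rfl⟩ : ∃ a, a = s ∨ wext w a = 0)

variable {w : Fin s → Fin 2}

lemma jf_le (hs : 1 ≤ s) (hend : wext w (s - 1) = 0) : jf w ≤ s - 1 :=
  Nat.find_min' _ (Or.inr hend)

lemma jf_zero (hs : 1 ≤ s) (hend : wext w (s - 1) = 0) : wext w (jf w) = 0 := by
  have h1 := jf_le hs hend
  rw [jf] at h1 ⊢
  obtain h2 | h2 := Nat.find_spec (⟨s, Or.inl rfl⟩ : ∃ a, a = s ∨ wext w a = 0)
  · omega
  · exact h2

lemma jf_ones {a : ℕ} (ha : a < jf w) : wext w a = 1 := by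
  have := Nat.find_min (⟨s, Or.inl rfl⟩ : ∃ a, a = s ∨ wext w a = 0) ha
  push_neg at this
  exact fin2_one this.2

lemma jf_lt_n (hn1 : 1 ≤ n) (hs : 1 ≤ s) (hw : w ∈ TS n s) : jf w ≤ n - 1 := by
  rw [TS, mem_filter] at hw
  obtain ⟨-, hav, hend⟩ := hw
  have hend' : wext w (s - 1) = 0 := hend.resolve_left (by omega)
  by_cases hns : n ≤ s
  · obtain ⟨t, ht, htz⟩ := hav 0 (by omega) (by omega)
    have h2 : jf w ≤ t := Nat.find_min' _ (Or.inr (by simpa using htz))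
    omega
  · have := jf_le hs hend'
    omega

/-- linear reconstruction map -/
def reconL (j : ℕ) {s' s : ℕ} (w' : Fin s' → Fin 2) : Fin s → Fin 2 := fun a =>
  if a.val < j - 1 then (1 : Fin 2) else if a.val = j - 1 then 0 else wext w' (a.val - j)

lemma reconL_val {j s' s : ℕ} (w' : Fin s' → Fin 2) {a : ℕ} (ha : a < s) :
    wext (reconL j (s := s) w') a =
      (if a < j - 1 then (1 : Fin 2) else if a = j - 1 then 0 else wext w' (a - j)) := by
  unfold wext reconL
  rw [dif_pos ha]
  rfl

/-- linear truncation map -/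
def cutL (j : ℕ) {s s' : ℕ} (w : Fin s → Fin 2) : Fin s' → Fin 2 :=
  fun i => wext w (j + i.val)

lemma cutL_mem (hn1 : 1 ≤ n) (hs : 1 ≤ s) {j : ℕ} (hj1 : 1 ≤ j) (hjn : j ≤ n) (hjs : j ≤ s)
    (hw : w ∈ TS n s) : cutL j (s' := s - j) w ∈ TS n (s - j) := by
  rw [TS, mem_filter] at hw ⊢
  obtain ⟨-, hav, hend⟩ := hw
  have hend' : wext w (s - 1) = 0 := hend.resolve_left (by omega)
  refine ⟨mem_univ _, ?_, ?_⟩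
  · intro i hi hins
    obtain ⟨t, ht, htz⟩ := hav (j + i) (by omega) (by omega)
    refine ⟨t, ht, ?_⟩
    have h2 : i + t < s - j := by omega
    have h3 : wext (cutL j (s' := s - j) w) (i + t) = wext w (j + (i + t)) := by
      unfold wext cutL
      rw [dif_pos h2]
      rfl
    rw [h3, (by omega : j + (i + t) = j + i + t)]
    exact htz
  · by_cases hsj : s - j = 0
    · exact Or.inl hsj
    · right
      have h2 : s - j - 1 < s - j := by omega
      have h3 : wext (cutL j (s' := s - j) w) (s - j - 1) = wext w (j + (s - j - 1)) := by
        unfold wext cutL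
        rw [dif_pos h2]
        rfl
      rw [h3, (by omega : j + (s - j - 1) = s - 1)]
      exact hend'

lemma reconL_mem (hn1 : 1 ≤ n) (hs : 1 ≤ s) {j : ℕ} (hj1 : 1 ≤ j) (hjn : j ≤ n) (hjs : j ≤ s)
    {w' : Fin (s - j) → Fin 2} (hw' : w' ∈ TS n (s - j)) :
    reconL j (s := s) w' ∈ TS n s ∧ jf (reconL j (s := s) w') = j - 1 := by
  rw [TS, mem_filter] at hw'
  obtain ⟨-, hav', hend'⟩ := hw'
  have hmem : reconL j (s := s) w' ∈ TS n s := by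
    rw [TS, mem_filter]
    refine ⟨mem_univ _, ?_, Or.inr ?_⟩
    · intro i hi hins
      by_cases hij : i < j
      · refine ⟨j - 1 - i, by omega, ?_⟩
        rw [reconL_val w' (by omega : i + (j - 1 - i) < s),
          (by omega : i + (j - 1 - i) = j - 1), if_neg (by omega), if_pos rfl]
      · push_neg at hij
        obtain ⟨t, ht, htz⟩ := hav' (i - j) (by omega) (by omega)
        refine ⟨t, ht, ?_⟩
        rw [reconL_val w' (by omega : i + t < s), if_neg (by omega), if_neg (by omega),
          (by omega : i + t - j = i - j + t)]
        exact htz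
    · by_cases hsj : s = j
      · rw [reconL_val w' (by omega : s - 1 < s), if_neg (by omega), if_pos (by omega)]
      · have h5 : wext w' (s - j - 1) = 0 := hend'.resolve_left (by omega)
        rw [reconL_val w' (by omega : s - 1 < s), if_neg (by omega), if_neg (by omega),
          (by omega : s - 1 - j = s - j - 1)]
        exact h5
  refine ⟨hmem, ?_⟩
  rw [jf, Nat.find_eq_iff]
  constructor
  · right
    rw [reconL_val w' (by omega : j - 1 < s), if_neg (by omega), if_pos rfl]
  · intro a ha
    rintro (rfl | haz)
    · omega
    · rw [reconL_val w' (by omega : a < s), if_pos (by omega)] at haz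
      exact absurd haz (by decide)

lemma reconL_cutL (hs : 1 ≤ s) {j : ℕ} (hj1 : 1 ≤ j) (hjs : j ≤ s)
    (hw : w ∈ TS n s) (hjf : jf w + 1 = j) :
    reconL j (s := s) (cutL j (s' := s - j) w) = w := by
  rw [TS, mem_filter] at hw
  obtain ⟨-, hav, hend⟩ := hw
  have hend' : wext w (s - 1) = 0 := hend.resolve_left (by omega)
  funext a
  have hwa : wext w a.val = w a := by
    unfold wext
    rw [dif_pos a.isLt]
  show (if a.val < j - 1 then (1 : Fin 2) else if a.val = j - 1 then 0
      else wext (cutL j (s' := s - j) w) (a.val - j)) = w a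
  by_cases h1 : a.val < j - 1
  · rw [if_pos h1, ← hwa]
    exact (jf_ones (by omega)).symm
  · rw [if_neg h1]
    by_cases h2 : a.val = j - 1
    · rw [if_pos h2, ← hwa, h2, (by omega : j - 1 = jf w)]
      exact (jf_zero hs hend').symm
    · rw [if_neg h2]
      have h3 : a.val - j < s - j := by have := a.isLt; omega
      have h4 : wext (cutL j (s' := s - j) w) (a.val - j) = wext w (j + (a.val - j)) := by
        unfold wext cutL
        rw [dif_pos h3]
        rfl
      rw [h4, (by omega : j + (a.val - j) = a.val), hwa]

lemma cutL_reconL (hs : 1 ≤ s) {j : ℕ} (hj1 : 1 ≤ j) (hjs : j ≤ s)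
    {w' : Fin (s - j) → Fin 2} :
    cutL j (s' := s - j) (reconL j (s := s) w') = w' := by
  funext i
  have h1 : j + i.val < s := by have := i.isLt; omega
  show wext (reconL j (s := s) w') (j + i.val) = w' i
  rw [reconL_val w' h1, if_neg (by omega), if_neg (by omega), (by omega : j + i.val - j = i.val)]
  unfold wext
  rw [dif_pos i.isLt]

lemma TS_card_rec (hn1 : 1 ≤ n) (hs : 1 ≤ s) :
    (TS n s).card = ∑ j ∈ Icc 1 n, if j ≤ s then (TS n (s - j)).card else 0 := by
  rw [← Finset.sum_filter]
  rw [Finset.card_eq_sum_card_fiberwise (f := fun w => jf w + 1)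
    (t := (Icc 1 n).filter (· ≤ s))]
  · apply Finset.sum_congr rfl
    intro j hj
    rw [mem_filter, mem_Icc] at hj
    obtain ⟨⟨hj1, hjn⟩, hjs⟩ := hj
    apply Finset.card_nbij' (i := cutL j (s' := s - j)) (j := reconL j (s := s))
    · intro w hw
      rw [mem_coe, mem_filter] at hw
      exact cutL_mem hn1 hs hj1 hjn hjs hw.1
    · intro w' hw'
      rw [mem_coe, mem_filter]
      have := reconL_mem hn1 hs hj1 hjn hjs hw'
      exact ⟨this.1, by omega⟩
    · intro w hw
      rw [mem_coe, mem_filter] at hw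
      exact reconL_cutL hs hj1 hjs hw.1 hw.2
    · intro w' _
      exact cutL_reconL hs hj1 hjs
  · intro w hw
    have h1 : wext w (s - 1) = 0 := by
      rw [TS, mem_coe, mem_filter] at hw
      exact hw.2.2.resolve_left (by omega)
    have h2 := jf_le hs h1
    have h3 := jf_lt_n hn1 hs (mem_coe.mp hw)
    rw [mem_coe, mem_filter, mem_Icc]
    dsimp only
    omega

end LinCount

def Tc (n s : ℕ) : ℕ :=
  if _hs : s = 0 then 1
  else ∑ j ∈ (Finset.Icc 1 (min n s)).attach, Tc n (s - j.1)
termination_by s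
decreasing_by
  have h1 := (Finset.mem_Icc.mp j.2).1
  omega

lemma Tc_zero (n : ℕ) : Tc n 0 = 1 := by rw [Tc]; simp

lemma Lucas_small {n m : ℕ} (hn : n ≠ 0) (hm : m ≤ n) : Lucas n m = 2 ^ m - 1 := by
  rw [Lucas]; simp [hn, hm]

lemma Lucas_rec {n m : ℕ} (hn : n ≠ 0) (hm : n < m) :
    Lucas n m = ∑ i ∈ Icc 1 n, Lucas n (m - i) := by
  rw [Lucas, dif_neg hn, dif_neg (by omega : ¬ m ≤ n)]
  exact Finset.sum_attach (Icc 1 n) (fun i => Lucas n (m - i))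

lemma sum_Icc_sub {M : Type*} [AddCommMonoid M] (f : ℕ → M) (s : ℕ) :
    ∑ j ∈ Icc 1 s, f (s - j) = ∑ i ∈ range s, f i := by
  apply Finset.sum_nbij' (i := fun j => s - j) (j := fun i => s - i)
  · intro a ha; simp only [mem_Icc] at ha; simp only [mem_range]; omega
  · intro a ha; simp only [mem_range] at ha; simp only [mem_Icc]; omega
  · intro a ha; simp only [mem_Icc] at ha; omega
  · intro a ha; simp only [mem_range] at ha; omega
  · intro a ha; rfl

lemma sum_Icc_shift {M : Type*} [AddCommMonoid M] (f : ℕ → M) (n : ℕ) :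
    ∑ j ∈ Icc 1 n, f j = ∑ s ∈ range n, f (s + 1) := by
  apply Finset.sum_nbij' (i := fun j => j - 1) (j := fun i => i + 1)
  · intro a ha; simp only [mem_Icc] at ha; simp only [mem_range]; omega
  · intro a ha; simp only [mem_range] at ha; simp only [mem_Icc]; omega
  · intro a ha; simp only [mem_Icc] at ha; omega
  · intro a ha; simp only [mem_range] at ha; omega
  · intro a ha; simp only [mem_Icc] at ha; congr 1; omega

lemma Tc_succ' {n s : ℕ} (hs : s ≠ 0) :
    Tc n s = ∑ i ∈ Icc 1 n, if i ≤ s then Tc n (s - i) else 0 := by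
  rw [Tc, dif_neg hs]
  rw [Finset.sum_attach (Icc 1 (min n s)) (fun j => Tc n (s - j))]
  rw [← Finset.sum_filter]
  apply Finset.sum_congr _ (fun _ _ => rfl)
  ext j; simp only [mem_Icc, mem_filter]; omega

lemma Tc_small {n : ℕ} : ∀ s, 1 ≤ s → s < n → Tc n s = 2 ^ (s - 1) := by
  intro s
  induction s using Nat.strong_induction_on with
  | _ s IH =>
    intro hs1 hsn
    rw [Tc, dif_neg (by omega)]
    rw [Finset.sum_attach (Icc 1 (min n s)) (fun j => Tc n (s - j))]
    have hmin : min n s = s := by omega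
    rw [hmin, sum_Icc_sub (fun i => Tc n i) s]
    have : ∑ i ∈ range s, Tc n i = 1 + ∑ i ∈ Ico 1 s, Tc n i := by
      rw [Finset.range_eq_Ico, ← Finset.sum_Ico_consecutive _ (by omega : 0 ≤ 1) (by omega : 1 ≤ s)]
      congr 1
      · simp [Tc_zero]
    rw [this]
    have h2 : ∑ i ∈ Ico 1 s, Tc n i = ∑ i ∈ Ico 1 s, 2 ^ (i - 1) := by
      apply Finset.sum_congr rfl
      intro i hi; simp only [mem_Ico] at hi
      exact IH i (by omega) (by omega) (by omega)
    rw [h2, Finset.sum_Ico_eq_sum_range]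
    have h3 : ∑ i ∈ range (s - 1), 2 ^ (1 + i - 1) = 2 ^ (s-1) - 1 := by
      have : ∀ i, 2 ^ (1 + i - 1) = 2 ^ i := by intro i; congr 1; omega
      simp only [this]
      induction (s-1) with
      | zero => simp
      | succ k ih => rw [Finset.sum_range_succ, ih]; have := Nat.one_le_two_pow (n := k); omega
    rw [h3]
    have := Nat.one_le_two_pow (n := s - 1)
    omega

lemma sum_Tc {n : ℕ} : ∀ m, 1 ≤ m → m ≤ n → ∑ i ∈ range m, Tc n i = 2 ^ (m - 1) := by
  intro m
  induction m with
  | zero => omega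
  | succ k ih =>
    intro _ hk
    rcases Nat.eq_zero_or_pos k with hk0 | hk1
    · subst hk0; simp [Tc_zero]
    · rw [Finset.sum_range_succ, ih hk1 (by omega), Tc_small k hk1 (by omega)]
      have he : k + 1 - 1 = k := by omega
      rw [he]
      have h1 : 2 ^ (k - 1) * 2 = 2 ^ k := by
        rw [← pow_succ]; congr 1; omega
      omega

lemma base_sum {n : ℕ} (hn : 1 ≤ n) : ∀ m, 1 ≤ m → m ≤ n →
    ∑ i ∈ range m, (m - i) * Tc n i = 2 ^ m - 1 := by
  intro m
  induction m with
  | zero => omega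
  | succ k ih =>
    intro _ hk
    rcases Nat.eq_zero_or_pos k with hk0 | hk1
    · subst hk0; simp [Tc_zero]
    · rw [Finset.sum_range_succ]
      have hsplit : ∑ i ∈ range k, (k + 1 - i) * Tc n i
          = ∑ i ∈ range k, (k - i) * Tc n i + ∑ i ∈ range k, Tc n i := by
        rw [← Finset.sum_add_distrib]
        apply Finset.sum_congr rfl
        intro i hi; simp only [mem_range] at hi
        have : k + 1 - i = (k - i) + 1 := by omega
        rw [this]; ring
      rw [hsplit, ih hk1 (by omega), sum_Tc k hk1 (by omega), Tc_small k hk1 (by omega)]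
      have he : k + 1 - k = 1 := by omega
      rw [he, one_mul]
      have h1 : 2 ^ (k - 1) * 2 = 2 ^ k := by
        rw [← pow_succ]; congr 1; omega
      have h2 : 2 ^ k + 2 ^ k = 2 ^ (k + 1) := by ring
      have := Nat.one_le_two_pow (n := k)
      omega

lemma Tc_lucas {n : ℕ} (hn : 1 ≤ n) : ∀ m, 1 ≤ m →
    (∑ j ∈ Icc 1 n, if j ≤ m then j * Tc n (m - j) else 0) = Lucas n m := by
  intro m
  induction m using Nat.strong_induction_on with
  | _ m IH =>
    intro hm1
    by_cases hmn : m ≤ n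
    · -- base band
      rw [Lucas_small (by omega) hmn]
      rw [← Finset.sum_filter]
      have hf : (Icc 1 n).filter (· ≤ m) = Icc 1 m := by
        ext j; simp only [mem_Icc, mem_filter]; omega
      rw [hf]
      have : ∑ j ∈ Icc 1 m, j * Tc n (m - j) = ∑ j ∈ Icc 1 m, (fun i => (m - i) * Tc n i) (m - j) := by
        apply Finset.sum_congr rfl
        intro j hj; simp only [mem_Icc] at hj
        simp only []
        congr 2
        omega
      rw [this, sum_Icc_sub (fun i => (m - i) * Tc n i) m]
      exact base_sum hn m hm1 hmn
    · push_neg at hmn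
      have hguard : ∀ j ∈ Icc 1 n, (if j ≤ m then j * Tc n (m - j) else 0) = j * Tc n (m - j) := by
        intro j hj; simp only [mem_Icc] at hj; rw [if_pos (by omega)]
      rw [Finset.sum_congr rfl hguard]
      have hstep : ∀ j ∈ Icc 1 n, j * Tc n (m - j)
          = ∑ i ∈ Icc 1 n, (if i ≤ m - j then j * Tc n (m - j - i) else 0) := by
        intro j hj; simp only [mem_Icc] at hj
        rw [Tc_succ' (by omega : m - j ≠ 0), Finset.mul_sum]
        apply Finset.sum_congr rfl
        intro i _
        rw [mul_ite, mul_zero]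
      rw [Finset.sum_congr rfl hstep, Finset.sum_comm]
      have hswap : ∀ i ∈ Icc 1 n, (∑ j ∈ Icc 1 n, if i ≤ m - j then j * Tc n (m - j - i) else 0)
          = Lucas n (m - i) := by
        intro i hi; simp only [mem_Icc] at hi
        have : ∀ j ∈ Icc 1 n, (if i ≤ m - j then j * Tc n (m - j - i) else 0)
            = (if j ≤ m - i then j * Tc n (m - i - j) else 0) := by
          intro j hj; simp only [mem_Icc] at hj
          have hiff : (i ≤ m - j) ↔ (j ≤ m - i) := by omega
          have harg : m - j - i = m - i - j := by omega
          rw [harg]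
          by_cases h : j ≤ m - i
          · rw [if_pos h, if_pos (hiff.mpr h)]
          · rw [if_neg h, if_neg (fun hc => h (hiff.mp hc))]
        rw [Finset.sum_congr rfl this]
        exact IH (m - i) (by omega) (by omega)
      rw [Finset.sum_congr rfl hswap]
      exact (Lucas_rec (by omega) hmn).symm

lemma sum_tri {M : Type*} [AddCommMonoid M] (f : ℕ → M) :
    ∀ n, (∑ k ∈ range n, ∑ r ∈ range (n - k), f (k + r)) = ∑ s ∈ range n, (s + 1) • f s := by
  intro n
  induction n with
  | zero => simp
  | succ n ih =>
    rw [Finset.sum_range_succ (f := fun k => ∑ r ∈ range (n + 1 - k), f (k + r))]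
    have h1 : ∀ k ∈ range n, ∑ r ∈ range (n + 1 - k), f (k + r)
        = (∑ r ∈ range (n - k), f (k + r)) + f n := by
      intro k hk; simp only [mem_range] at hk
      have : n + 1 - k = (n - k) + 1 := by omega
      rw [this, Finset.sum_range_succ]
      congr 2
      omega
    rw [Finset.sum_congr rfl h1, Finset.sum_add_distrib, ih]
    simp only [Nat.sub_self, Finset.sum_const, Finset.card_range, Finset.sum_range_one,
      Finset.sum_range_succ]
    have : n + 1 - n = 1 := by omega
    rw [this, Finset.sum_range_one]
    rw [add_assoc]
    congr 1
    rw [succ_nsmul]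
    congr 1



lemma TS_card_eq_Tc {n : ℕ} (hn1 : 1 ≤ n) : ∀ s, (TS n s).card = Tc n s := by
  intro s
  induction s using Nat.strong_induction_on with
  | _ s IH =>
    rcases Nat.eq_zero_or_pos s with hs0 | hs1
    · subst hs0
      rw [Tc_zero, TS]
      rw [Finset.filter_true_of_mem (fun w _ => ⟨fun i hi _ => absurd hi (by omega), Or.inl rfl⟩)]
      rw [Finset.card_univ]
      simp
    · rw [TS_card_rec hn1 hs1, Tc_succ' (by omega : s ≠ 0)]
      apply Finset.sum_congr rfl
      intro j hj
      rw [mem_Icc] at hj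
      by_cases hjs : j ≤ s
      · rw [if_pos hjs, if_pos hjs, IH (s - j) (by omega)]
      · rw [if_neg hjs, if_neg hjs]

lemma CS_card_eq {n m : ℕ} [NeZero m] (hn1 : 1 ≤ n) (hnm : n < m) :
    (CS n m).card = Lucas n m := by
  rw [CS_card_sum hn1 hnm]
  have h1 : ∀ p ∈ ((range n ×ˢ range n).filter (fun p : ℕ × ℕ => p.1 + p.2 + 1 ≤ n)),
      (TS n (m - 1 - p.1 - p.2)).card = Tc n (m - 1 - (p.1 + p.2)) := by
    intro p _
    rw [TS_card_eq_Tc hn1, (by omega : m - 1 - p.1 - p.2 = m - 1 - (p.1 + p.2))]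
  rw [Finset.sum_congr rfl h1, Finset.sum_filter, Finset.sum_product]
  have h2 : ∀ k ∈ range n,
      (∑ r ∈ range n, if k + r + 1 ≤ n then Tc n (m - 1 - (k + r)) else 0)
        = ∑ r ∈ range (n - k), Tc n (m - 1 - (k + r)) := by
    intro k hk
    rw [← Finset.sum_filter]
    congr 1
    ext x
    simp only [mem_filter, mem_range]
    omega
  rw [Finset.sum_congr rfl h2, sum_tri (fun x => Tc n (m - 1 - x)) n]
  rw [← Tc_lucas hn1 m (by omega), sum_Icc_shift (fun j => if j ≤ m then j * Tc n (m - j) else 0) n]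
  apply Finset.sum_congr rfl
  intro x hx
  rw [mem_range] at hx
  rw [if_pos (by omega : x + 1 ≤ m), smul_eq_mul, (by omega : m - (x + 1) = m - 1 - x)]

lemma good_card_add (n m : ℕ) [NeZero m] :
    (univ.filter (GoodP n m)).card + Lucas n m = 2 ^ m := by
  have hcardU : (univ : Finset (Fin m → Fin 2)).card = 2 ^ m := by
    rw [Finset.card_univ, Fintype.card_fun]
    simp
  rcases Nat.eq_zero_or_pos n with hn0 | hn1
  · subst hn0
    have hLuc : Lucas 0 m = 0 := by rw [Lucas]; simp
    rw [Finset.filter_true_of_mem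
      (fun v _ => ⟨0, mpos, fun t ht => absurd ht (by omega)⟩), hLuc, hcardU]
    omega
  · by_cases hmn : m ≤ n
    · have hLuc : Lucas n m = 2 ^ m - 1 := Lucas_small (by omega) hmn
      have hfil : univ.filter (GoodP n m) = {fun _ => (1 : Fin 2)} := by
        ext v
        rw [mem_filter, mem_singleton]
        constructor
        · rintro ⟨-, j, hj, hones⟩
          funext i
          have ht : (i.val + (m - j)) % m < n := lt_of_lt_of_le (Nat.mod_lt _ mpos) hmn
          have hone := hones _ ht
          have he : ((i.val + (m - j)) % m + j) % m = i.val % m := by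
            rw [Nat.mod_add_mod, (by omega : i.val + (m - j) + j = i.val + m),
              Nat.add_mod_right]
          rw [cyc_congr v he, cyc_small v i.isLt] at hone
          simpa using hone
        · rintro rfl
          exact ⟨mem_univ _, 0, mpos, fun t ht => rfl⟩
      rw [hfil, card_singleton, hLuc]
      have := Nat.one_le_two_pow (n := m)
      omega
    · push_neg at hmn
      have h1 := Finset.card_filter_add_card_filter_not (s := (univ : Finset (Fin m → Fin 2)))
        (p := GoodP n m)
      have h2 : (CS n m).card = Lucas n m := CS_card_eq hn1 hmn
      rw [CS] at h2
      rw [hcardU] at h1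
      omega

section Reduce
variable {l m : ℕ} [NeZero l] [NeZero m]

def resV (m : ℕ) [NeZero m] {l : ℕ} [NeZero l] (u : Fin l → Fin 2) : Fin m → Fin 2 :=
  fun i => u ((i.val : ℕ) : Fin l)

def extU (l : ℕ) [NeZero l] {m : ℕ} [NeZero m] (v : Fin m → Fin 2) : Fin l → Fin 2 :=
  fun t => v ((t.val : ℕ) : Fin m)

lemma per_cast {u : Fin l → Fin 2} (hp : ∀ t, u (t + (m : Fin l)) = u t) :
    ∀ a : ℕ, u ((a : Fin l)) = u (((a % m : ℕ)) : Fin l) := by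
  intro a
  induction a using Nat.strong_induction_on with
  | _ a IH =>
    by_cases ham : a < m
    · rw [Nat.mod_eq_of_lt ham]
    · push_neg at ham
      have hm1 : 0 < m := mpos
      have e1 : ((a : ℕ) : Fin l) = (((a - m : ℕ) : Fin l)) + (m : Fin l) := by
        rw [← Nat.cast_add]; congr 1; omega
      rw [e1, hp, IH (a - m) (by omega), ← Nat.mod_eq_sub_mod ham]

lemma cyc_resV {u : Fin l → Fin 2} (hp : ∀ t, u (t + (m : Fin l)) = u t) (a : ℕ) :
    cyc m (resV m u) a = u ((a : Fin l)) := by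
  unfold cyc resV
  rw [Fin.val_natCast]
  exact (per_cast hp a).symm

lemma xln_iff (hml : m ≤ l) {n : ℕ} (hn : n ≤ l) {u : Fin l → Fin 2}
    (hp : ∀ t, u (t + (m : Fin l)) = u t) :
    (∃ j : Fin l, ∀ t : Fin l, (t : ℕ) < n → u (t + j) = 1) ↔ GoodP n m (resV m u) := by
  constructor
  · rintro ⟨j, hj⟩
    refine ⟨j.val % m, Nat.mod_lt _ mpos, fun t ht => ?_⟩
    rw [cyc_resV hp]
    have e1 : u (((t + j.val % m : ℕ)) : Fin l) = u (((t + j.val : ℕ)) : Fin l) := by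
      rw [per_cast hp (t + j.val % m), per_cast hp (t + j.val)]
      congr 2
      rw [Nat.add_mod t (j.val % m), Nat.mod_mod_of_dvd _ dvd_rfl, ← Nat.add_mod]
    rw [e1]
    have e2 : (((t + j.val : ℕ)) : Fin l) = (t : Fin l) + j := by
      rw [Nat.cast_add, Fin.cast_val_eq_self]
    rw [e2]
    apply hj
    rw [Fin.val_natCast]
    have h3 : t % l = t := Nat.mod_eq_of_lt (by omega)
    omega
  · rintro ⟨j, hjm, hones⟩
    refine ⟨⟨j, by omega⟩, fun t htn => ?_⟩
    have h1 := hones t.val htn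
    rw [cyc_resV hp] at h1
    have e2 : (((t.val + j : ℕ)) : Fin l) = t + ⟨j, by omega⟩ := by
      rw [Nat.cast_add, Fin.cast_val_eq_self]
      congr 1
      apply Fin.ext
      rw [Fin.val_natCast]
      exact Nat.mod_eq_of_lt (by omega)
    rw [e2] at h1
    exact h1

lemma extU_per (hml : m ≤ l) (hdvd : m ∣ l) (v : Fin m → Fin 2) :
    ∀ t : Fin l, extU l v (t + (m : Fin l)) = extU l v t := by
  intro t
  unfold extU
  congr 1
  apply Fin.ext
  rw [Fin.val_natCast, Fin.val_natCast]
  have h1 : (t + (m : Fin l)).val = (t.val + m % l) % l := by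
    rw [Fin.val_add, Fin.val_natCast]
  rw [h1, Nat.mod_mod_of_dvd _ hdvd]
  by_cases hml2 : m = l
  · subst hml2; rw [Nat.mod_self, Nat.add_zero]
  · rw [Nat.mod_eq_of_lt (lt_of_le_of_ne hml hml2), Nat.add_mod_right]

lemma resV_extU (hml : m ≤ l) (v : Fin m → Fin 2) : resV m (extU l v) = v := by
  funext i
  unfold resV extU
  congr 1
  rw [Fin.val_natCast, Nat.mod_eq_of_lt (lt_of_lt_of_le i.isLt hml)]
  exact Fin.cast_val_eq_self i

lemma extU_resV {u : Fin l → Fin 2} (hp : ∀ t, u (t + (m : Fin l)) = u t) :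
    extU l (resV m u) = u := by
  funext t
  unfold extU resV
  rw [Fin.val_natCast, ← per_cast hp t.val, Fin.cast_val_eq_self]

end Reduce

end CardAux

/-- For `l ≥ 1`, `0 ≤ n ≤ l` and `m` a positive divisor of `l`,
`#{u ∈ X_{l,n} : m·u = u} = 2^m − L^n_m`. -/
theorem card_fixed_Xln (l n m : ℕ) [NeZero l] (hn : n ≤ l) (hm : m ∣ l) :
    Nat.card {u : Fin l → Fin 2 // u ∈ Xln l n ∧ ∀ t, u (t + (Fin.ofNat l m)) = u t} =
      2 ^ m - Lucas n m := by
  have hm0 : m ≠ 0 := by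
    rintro rfl
    exact (NeZero.ne l) (Nat.eq_zero_of_zero_dvd hm)
  haveI : NeZero m := ⟨hm0⟩
  have hml : m ≤ l := Nat.le_of_dvd (Nat.pos_of_ne_zero (NeZero.ne l)) hm
  have hequiv : {u : Fin l → Fin 2 // u ∈ Xln l n ∧ ∀ t, u (t + (Fin.ofNat l m)) = u t}
      ≃ {v : Fin m → Fin 2 // CardAux.GoodP n m v} :=
    { toFun := fun u => ⟨CardAux.resV m u.1, (CardAux.xln_iff hml hn u.2.2).mp u.2.1⟩
      invFun := fun v => ⟨CardAux.extU l v.1, by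
        have hper := CardAux.extU_per hml hm v.1
        refine ⟨?_, hper⟩
        exact (CardAux.xln_iff hml hn hper).mpr (by rw [CardAux.resV_extU hml]; exact v.2)⟩
      left_inv := fun u => Subtype.ext (CardAux.extU_resV u.2.2)
      right_inv := fun v => Subtype.ext (CardAux.resV_extU hml v.1) }
  rw [Nat.card_congr hequiv, Nat.card_eq_fintype_card, Fintype.card_subtype]
  have h : (Finset.univ.filter (fun x => CardAux.GoodP n m x)).card + Lucas n m = 2 ^ m :=
    CardAux.good_card_add n m
  omega
end
end
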